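/- Let E be a directed graph and v ∈ E⁰. Then the element [v] of the talented monoid M_E^Γ is periodic if and only if v lies in the saturated closure of a finite set of vertices lying on cycles without exits. -/

import Mathlib

/-- A directed graph: vertices, edges, source and range maps. -/
structure DGraph where
  V : Type
  Ed : Type
  s : Ed → V
  r : Ed → V

namespace DGraph

variable (E : DGraph)

/-- One-step adjacency: there is an edge from `u` to `v`. -/
def Adj (u v : E.V) : Prop := ∃ e, E.s e = u ∧ E.r e = v

/-- `u ≥ v`: there is a (finite) path from `u` to `v`. -/
def Reaches (u v : E.V) : Prop := Relation.ReflTransGen E.Adj u v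

/-- The tree `T(W)` of a set of vertices. -/
def tree (W : Set E.V) : Set E.V := {u | ∃ v ∈ W, E.Reaches v u}

/-- The root `R(W)` of a set of vertices. -/
def root (W : Set E.V) : Set E.V := {u | ∃ v ∈ W, E.Reaches u v}

/-- The set of edges emitted by `v`. -/
def emits (v : E.V) : Set E.Ed := {e | E.s e = v}

/-- A sink emits no edges. -/
def IsSink (v : E.V) : Prop := E.emits v = ∅

/-- An infinite emitter emits infinitely many edges. -/
def IsInfEmitter (v : E.V) : Prop := (E.emits v).Infinite

/-- A regular vertex is neither a sink nor an infinite emitter. -/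
def IsRegular (v : E.V) : Prop := (E.emits v).Nonempty ∧ (E.emits v).Finite

/-- A hereditary set of vertices: `T(H) ⊆ H`. -/
def Hereditary (H : Set E.V) : Prop := ∀ u ∈ H, ∀ v, E.Reaches u v → v ∈ H

/-- A saturated set of vertices. -/
def Saturated (H : Set E.V) : Prop :=
  ∀ v, E.IsRegular v → (∀ e ∈ E.emits v, E.r e ∈ H) → v ∈ H

/-- The saturated closure of `W`: the smallest hereditary and saturated set containing `W`. -/
def satClosure (W : Set E.V) : Set E.V :=
  ⋂₀ {H : Set E.V | E.Hereditary H ∧ E.Saturated H ∧ W ⊆ H}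

/-- `es` is a finite walk (path) starting at `u`; `es = []` is the trivial path at `u`. -/
def IsWalkFrom (u : E.V) (es : List E.Ed) : Prop :=
  es.Chain' (fun e f => E.r e = E.s f) ∧ ∀ e ∈ es.head?, E.s e = u

/-- The terminal vertex (range) of the walk `es` starting at `u`. -/
def endVert (u : E.V) (es : List E.Ed) : E.V := es.getLast?.elim u E.r

/-- The set of vertices on the walk `es` starting at `u`. -/
def walkVerts (u : E.V) (es : List E.Ed) : Set E.V :=
  insert u {v | ∃ e ∈ es, E.r e = v}

/-- An infinite path. -/
def IsInfPath (f : ℕ → E.Ed) : Prop := ∀ n, E.r (f n) = E.s (f (n + 1))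

/-- The set of vertices on an infinite path. -/
def infVerts (f : ℕ → E.Ed) : Set E.V := Set.range fun n => E.s (f n)

/-- Elements of `E^{≤∞}`: finite walks or infinite paths. -/
inductive GPath (E : DGraph) : Type where
  | fin : E.V → List E.Ed → GPath E
  | inf : (ℕ → E.Ed) → GPath E

/-- Membership in `E^{≤∞}`: a well-formed finite path ending in a sink or an infinite
emitter, or an infinite path. -/
def gmem : GPath E → Prop
  | .fin u es => E.IsWalkFrom u es ∧
      (E.IsSink (E.endVert u es) ∨ E.IsInfEmitter (E.endVert u es))
  | .inf f => E.IsInfPath f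

/-- `p⁰`, the vertex set of an element of `E^{≤∞}`. -/
def gverts : GPath E → Set E.V
  | .fin u es => E.walkVerts u es
  | .inf f => E.infVerts f

/-- The graph `E` is cofinal. -/
def Cofinal : Prop :=
  ∀ v : E.V, ∀ p : GPath E, E.gmem p → ∃ w ∈ E.gverts p, E.Reaches v w

/-- `es` is a cycle based at `u`. -/
def IsCycle (u : E.V) (es : List E.Ed) : Prop :=
  es ≠ [] ∧ E.IsWalkFrom u es ∧ E.endVert u es = u ∧ (es.map E.s).Nodup

/-- The cycle `es` (based at `u`) has an exit. -/
def HasExit (u : E.V) (es : List E.Ed) : Prop :=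
  ∃ v ∈ E.walkVerts u es, ∃ e, E.s e = v ∧ e ∉ es

/-- An extreme cycle: a cycle with an exit such that `T(c⁰) ⊆ R(c⁰)`. -/
def IsExtremeCycle (u : E.V) (es : List E.Ed) : Prop :=
  E.IsCycle u es ∧ E.HasExit u es ∧
    E.tree (E.walkVerts u es) ⊆ E.root (E.walkVerts u es)

/-- `v` lies on some cycle. -/
def OnCycle (v : E.V) : Prop := ∃ u es, E.IsCycle u es ∧ v ∈ E.walkVerts u es

/-- A terminal (infinite) path. -/
def IsTerminalPath (f : ℕ → E.Ed) : Prop :=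
  E.IsInfPath f ∧
  (∀ v ∈ E.tree (E.infVerts f), ¬ E.IsInfEmitter v ∧ ¬ E.OnCycle v) ∧
  (∀ g : ℕ → E.Ed, E.IsInfPath g → E.s (g 0) ∈ E.infVerts f →
      E.tree (E.infVerts g) ⊆ E.root (E.infVerts g))

/-- A terminal vertex: a sink, a vertex on a cycle without exits, a vertex on an
extreme cycle, or a vertex on a terminal path. -/
def IsTerminalVert (v : E.V) : Prop :=
  E.IsSink v ∨
  (∃ u es, E.IsCycle u es ∧ ¬ E.HasExit u es ∧ v ∈ E.walkVerts u es) ∨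
  (∃ u es, E.IsExtremeCycle u es ∧ v ∈ E.walkVerts u es) ∨
  (∃ f, E.IsTerminalPath f ∧ v ∈ E.infVerts f)

/-- `p ∼ q` for elements of `E^{≤∞}`: `R(p⁰) = R(q⁰)`. -/
def pequiv (p q : GPath E) : Prop := E.root (E.gverts p) = E.root (E.gverts q)

/-- `v ≈ w` for terminal vertices. -/
def approx (v w : E.V) : Prop :=
  E.IsTerminalVert v ∧ E.IsTerminalVert w ∧
  ∃ p q : GPath E, E.gmem p ∧ E.gmem q ∧ v ∈ E.gverts p ∧ w ∈ E.gverts q ∧ E.pequiv p q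

/-- The cluster of a terminal vertex `v`: its `≈`-equivalence class. -/
def cluster (v : E.V) : Set E.V := {w | E.approx v w}

/-- `C` is a cluster of `E`. -/
def IsCluster (C : Set E.V) : Prop := ∃ v, E.IsTerminalVert v ∧ C = E.cluster v

/-- `Ter(E)`: the saturated closure of the set of terminal vertices. -/
def Ter : Set E.V := E.satClosure {v | E.IsTerminalVert v}

/-- The set `B_H` of breaking vertices of a (hereditary and saturated) set `H`. -/
def breaking (H : Set E.V) : Set E.V :=
  {v | v ∉ H ∧ E.IsInfEmitter v ∧
    {e | E.s e = v ∧ E.r e ∉ H}.Nonempty ∧ {e | E.s e = v ∧ E.r e ∉ H}.Finite}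

/-- `(H, S)` is an admissible pair. -/
def Admissible (H S : Set E.V) : Prop :=
  E.Hereditary H ∧ E.Saturated H ∧ S ⊆ E.breaking H

end DGraph
namespace DGraph

variable (E : DGraph)

/-- Generators `q^v_Z`: an infinite emitter `v` with a finite nonempty `Z ⊆ s⁻¹(v)`. -/
def QGen : Type :=
  {p : E.V × Set E.Ed // E.IsInfEmitter p.1 ∧ p.2 ⊆ E.emits p.1 ∧ p.2.Nonempty ∧ p.2.Finite}

/-- Generators of the talented monoid: vertices and elements `q^v_Z`. -/
def TalGen : Type := E.V ⊕ E.QGen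

/-- The free commutative `Γ`-monoid on the generators, `Γ = ⟨t⟩` infinite cyclic:
a basis element `(k, g)` stands for `tᵏ g`. -/
abbrev FreeTal : Type := (ℤ × E.TalGen) →₀ ℕ

/-- The element `Σ_{e ∈ F} t^{k+1}[r(e)]` of the free monoid. -/
noncomputable def tSum (k : ℤ) (F : Finset E.Ed) : E.FreeTal :=
  ∑ e ∈ F, Finsupp.single (k + 1, (Sum.inl (E.r e) : E.TalGen)) 1

/-- The defining relations of the talented monoid (at every degree `k`). -/
def TalRel : E.FreeTal → E.FreeTal → Prop := fun x y =>
  (∃ (k : ℤ) (v : E.V) (h : E.IsRegular v),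
      x = Finsupp.single (k, (Sum.inl v : E.TalGen)) 1 ∧ y = E.tSum k h.2.toFinset) ∨
  (∃ (k : ℤ) (g : E.QGen),
      x = Finsupp.single (k, (Sum.inl g.1.1 : E.TalGen)) 1 ∧
      y = (Finsupp.single (k, (Sum.inr g : E.TalGen)) 1 : E.FreeTal)
            + E.tSum k g.2.2.2.2.toFinset) ∨
  (∃ (k : ℤ) (g₁ g₂ : E.QGen),
      g₁.1.1 = g₂.1.1 ∧ g₁.1.2 ⊆ g₂.1.2 ∧ g₁.1.2 ≠ g₂.1.2 ∧
      x = Finsupp.single (k, (Sum.inr g₁ : E.TalGen)) 1 ∧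
      y = (Finsupp.single (k, (Sum.inr g₂ : E.TalGen)) 1 : E.FreeTal) +
            E.tSum k ((g₂.2.2.2.2.subset Set.diff_subset
              (t := g₂.1.2 \ g₁.1.2)).toFinset))

/-- The congruence generated by the defining relations. -/
noncomputable def talCon : AddCon E.FreeTal := addConGen E.TalRel

/-- The talented monoid `M_E^Γ`. -/
abbrev Tal : Type := E.talCon.Quotient

/-- The shift `tⁿ` on the free monoid. -/
noncomputable def shiftF (n : ℤ) : E.FreeTal →+ E.FreeTal :=
  Finsupp.mapDomain.addMonoidHom (fun p => (p.1 + n, p.2))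

theorem shiftF_single (n k : ℤ) (g : E.TalGen) (c : ℕ) :
    E.shiftF n (Finsupp.single (k, g) c) = Finsupp.single (k + n, g) c := by
  simp [shiftF, Finsupp.mapDomain.addMonoidHom_apply, Finsupp.mapDomain_single]

theorem shiftF_tSum (n k : ℤ) (F : Finset E.Ed) :
    E.shiftF n (E.tSum k F) = E.tSum (k + n) F := by
  unfold tSum
  rw [map_sum]
  refine Finset.sum_congr rfl fun e _ => ?_
  rw [add_right_comm]
  exact E.shiftF_single n (k + 1) _ 1

theorem shiftF_rel (n : ℤ) {x y : E.FreeTal} (h : E.TalRel x y) :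
    E.TalRel (E.shiftF n x) (E.shiftF n y) := by
  rcases h with ⟨k, v, hv, hx, hy⟩ | ⟨k, g, hx, hy⟩ | ⟨k, g₁, g₂, h1, h2, h3, hx, hy⟩
  · exact Or.inl ⟨k + n, v, hv, by rw [hx]; exact E.shiftF_single _ _ _ _, by rw [hy, shiftF_tSum]⟩
  · refine Or.inr (Or.inl ⟨k + n, g, by rw [hx]; exact E.shiftF_single _ _ _ _, ?_⟩)
    rw [hy, map_add, shiftF_tSum]
    exact congrArg (· + _) (E.shiftF_single _ _ _ _)
  · refine Or.inr (Or.inr ⟨k + n, g₁, g₂, h1, h2, h3, by rw [hx]; exact E.shiftF_single _ _ _ _, ?_⟩)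
    rw [hy, map_add, shiftF_tSum]
    exact congrArg (· + _) (E.shiftF_single _ _ _ _)

/-- The action of `tⁿ` on the talented monoid. -/
noncomputable def shiftT (n : ℤ) : E.Tal →+ E.Tal :=
  AddCon.lift E.talCon (E.talCon.mk'.comp (E.shiftF n)) (by
    refine AddCon.addConGen_le.mpr fun x y hxy => ?_
    have h := E.shiftF_rel n hxy
    show E.talCon.mk' (E.shiftF n x) = E.talCon.mk' (E.shiftF n y)
    exact (AddCon.eq _).mpr (AddConGen.Rel.of _ _ h))

/-- The element `[v]` of the talented monoid. -/
noncomputable def tv (v : E.V) : E.Tal :=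
  E.talCon.mk' (Finsupp.single ((0 : ℤ), (Sum.inl v : E.TalGen)) 1)

/-- The element `[q^v_Z]` of the talented monoid. -/
noncomputable def tq (g : E.QGen) : E.Tal :=
  E.talCon.mk' (Finsupp.single ((0 : ℤ), (Sum.inr g : E.TalGen)) 1)

/-- The algebraic (pre)order on the talented monoid. -/
def talLE (x y : E.Tal) : Prop := ∃ z, y = x + z

/-- A periodic element: nonzero with `tⁿ x = x` for some `n > 0`. -/
def TPeriodic (x : E.Tal) : Prop := x ≠ 0 ∧ ∃ n : ℤ, 0 < n ∧ E.shiftT n x = x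

/-- An aperiodic element: nonzero with `tⁿ x ≤ x`, `tⁿ x ≠ x` for some `n > 0`. -/
def TAperiodic (x : E.Tal) : Prop :=
  x ≠ 0 ∧ ∃ n : ℤ, 0 < n ∧ E.talLE (E.shiftT n x) x ∧ E.shiftT n x ≠ x

/-- An incomparable element: nonzero and incomparable with `tⁿ x` for every `n > 0`. -/
def TIncomparable (x : E.Tal) : Prop :=
  x ≠ 0 ∧ ∀ n : ℤ, 0 < n → ¬ E.talLE x (E.shiftT n x) ∧ ¬ E.talLE (E.shiftT n x) x

/-- A comparable element: periodic or aperiodic. -/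
def TComparable (x : E.Tal) : Prop := E.TPeriodic x ∨ E.TAperiodic x

/-- A `Γ`-order-ideal of the talented monoid. -/
def IsGOI (I : Set E.Tal) : Prop :=
  0 ∈ I ∧ (∀ x ∈ I, ∀ y ∈ I, x + y ∈ I) ∧
  (∀ n : ℤ, ∀ x ∈ I, E.shiftT n x ∈ I) ∧
  (∀ x y : E.Tal, x + y ∈ I → x ∈ I ∧ y ∈ I)

/-- The `Γ`-order-ideal generated by a set. -/
def genGOI (A : Set E.Tal) : Set E.Tal := ⋂₀ {I | E.IsGOI I ∧ A ⊆ I}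

/-- A minimal nonzero `Γ`-order-ideal. -/
def MinGOI (I : Set E.Tal) : Prop :=
  E.IsGOI I ∧ I ≠ {0} ∧ ∀ J, E.IsGOI J → J ⊆ I → J ≠ {0} → J = I

/-- The generator `q^v_Z` with `Z = s⁻¹(v) ∩ r⁻¹(E⁰ − H)`, for `v ∈ B_H`;
it represents `[v^H]`. -/
noncomputable def vhGen (H : Set E.V) (v : E.V) (h : v ∈ E.breaking H) : E.QGen :=
  ⟨(v, {e | E.s e = v ∧ E.r e ∉ H}), h.2.1, fun _ he => he.1, h.2.2.1, h.2.2.2⟩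

attribute [reducible] TalGen QGen


/-! ### Rewriting system and Church–Rosser property -/

section CR

variable {E : DGraph}

/-- One rewriting step: apply a defining relation in some additive context. -/
def Step (E : DGraph) (x y : E.FreeTal) : Prop :=
  ∃ u a b, E.TalRel a b ∧ x = u + a ∧ y = u + b

theorem Step.add_right {x y : E.FreeTal} (h : E.Step x y) (z : E.FreeTal) :
    E.Step (x + z) (y + z) := by
  obtain ⟨u, a, b, hr, hx, hy⟩ := h
  exact ⟨u + z, a, b, hr, by rw [hx]; abel, by rw [hy]; abel⟩

/-- Iterated rewriting. -/
def Steps (E : DGraph) : E.FreeTal → E.FreeTal → Prop :=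
  Relation.ReflTransGen E.Step

theorem Steps.add_right {x y : E.FreeTal} (h : E.Steps x y) (z : E.FreeTal) :
    E.Steps (x + z) (y + z) := by
  induction h with
  | refl => exact Relation.ReflTransGen.refl
  | tail _ hs ih => exact ih.tail (hs.add_right z)

theorem talrel_lhs {a b : E.FreeTal} (h : E.TalRel a b) :
    ∃ p : ℤ × E.TalGen, a = Finsupp.single p 1 := by
  rcases h with ⟨k, v, hv, hx, -⟩ | ⟨k, g, hx, -⟩ | ⟨k, g₁, g₂, -, -, -, hx, -⟩
  · exact ⟨_, hx⟩
  · exact ⟨_, hx⟩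
  · exact ⟨_, hx⟩

theorem exists_eq_add_single {x : E.FreeTal} {p : ℤ × E.TalGen} (h : 1 ≤ x p) :
    ∃ u, x = u + Finsupp.single p 1 := by
  refine ⟨x - Finsupp.single p 1, ?_⟩
  rw [tsub_add_cancel_of_le]
  rwa [Finsupp.single_le_iff]

theorem tSum_split (k : ℤ) {A B C : Finset E.Ed}
    (h : ∀ e, e ∈ C ↔ e ∈ A ∨ e ∈ B) (hd : ∀ e ∈ A, e ∉ B) :
    E.tSum k C = E.tSum k A + E.tSum k B := by
  classical
  have hC : C = A ∪ B := by
    ext e; simp [h e, Finset.mem_union]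
  have hdis : Disjoint A B := by
    rw [Finset.disjoint_left]; exact hd
  rw [hC]
  exact Finset.sum_union hdis

end CR

section CR2

variable {E : DGraph}

theorem single_one_inj {p q : ℤ × E.TalGen}
    (h : Finsupp.single p (1 : ℕ) = Finsupp.single q 1) : p = q := by
  rcases (Finsupp.single_eq_single_iff _ _ _ _).1 h with ⟨h1, -⟩ | ⟨h1, -⟩
  · exact h1
  · exact absurd h1 one_ne_zero

/-- Union of two q-generators at the same vertex. -/
def QGen.union (g g' : E.QGen) (h : g.1.1 = g'.1.1) : E.QGen :=
  ⟨(g.1.1, g.1.2 ∪ g'.1.2), g.2.1,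
    Set.union_subset g.2.2.1 (by rw [h]; exact g'.2.2.1),
    g.2.2.2.1.mono Set.subset_union_left,
    g.2.2.2.2.union g'.2.2.2.2⟩

theorem qstep' (u : E.FreeTal) (k : ℤ) (g G : E.QGen) (hv : g.1.1 = G.1.1)
    (hsub : g.1.2 ⊆ G.1.2) {S T : Set E.Ed} (hS : S.Finite) (hT : T.Finite)
    (hmem : ∀ e, e ∈ T ↔ e ∈ S ∨ e ∈ G.1.2 \ g.1.2)
    (hdisj : ∀ e ∈ S, e ∉ G.1.2 \ g.1.2) :
    Relation.ReflGen E.Step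
      (u + ((Finsupp.single (k, (Sum.inr g : E.TalGen)) 1 : E.FreeTal) + E.tSum k hS.toFinset))
      (u + ((Finsupp.single (k, (Sum.inr G : E.TalGen)) 1 : E.FreeTal) + E.tSum k hT.toFinset)) := by
  by_cases hZ : g.1.2 = G.1.2
  · have hgG : g = G := Subtype.ext (Prod.ext hv hZ)
    have hempty : G.1.2 \ g.1.2 = ∅ := by rw [hZ]; exact Set.diff_self
    have hST : T = S := by
      ext e; rw [hmem e, hempty]; simp
    have hfin : hT.toFinset = hS.toFinset := Set.Finite.toFinset_inj.mpr hST
    rw [hfin, ← hgG]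
  · refine Relation.ReflGen.single ?_
    refine ⟨u + E.tSum k hS.toFinset, _, _,
      Or.inr (Or.inr ⟨k, g, G, hv, hsub, hZ, rfl, rfl⟩), by simp only [add_comm, add_left_comm, add_assoc], ?_⟩
    have hsplit : E.tSum k hT.toFinset
        = E.tSum k hS.toFinset +
          E.tSum k ((G.2.2.2.2.subset Set.diff_subset (t := G.1.2 \ g.1.2)).toFinset) := by
      refine tSum_split k (fun e => ?_) (fun e he => ?_)
      · simp only [Set.Finite.mem_toFinset]; exact hmem e
      · simp only [Set.Finite.mem_toFinset] at *; exact hdisj e he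
    rw [hsplit]; abel

theorem diamond {x y z : E.FreeTal} (hxy : E.Step x y) (hxz : E.Step x z) :
    ∃ d, Relation.ReflGen E.Step y d ∧ Relation.ReflTransGen E.Step z d := by
  obtain ⟨u₁, a₁, b₁, hr₁, hx₁, hy⟩ := hxy
  obtain ⟨u₂, a₂, b₂, hr₂, hx₂, hz⟩ := hxz
  obtain ⟨p₁, ha₁⟩ := talrel_lhs hr₁
  obtain ⟨p₂, ha₂⟩ := talrel_lhs hr₂
  subst ha₁; subst ha₂; subst hy; subst hz; subst hx₁
  by_cases hpp : p₁ = p₂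
  · subst hpp
    have hu : u₁ = u₂ := add_right_cancel hx₂
    subst hu
    clear hx₂
    rcases hr₁ with ⟨k₁, v₁, hv₁, hx₁', hb₁⟩ | ⟨k₁, g₁, hx₁', hb₁⟩ |
      ⟨k₁, gA, gB, hAB1, hAB2, hAB3, hx₁', hb₁⟩ <;>
    rcases hr₂ with ⟨k₂, v₂, hv₂, hx₂', hb₂⟩ | ⟨k₂, g₂, hx₂', hb₂⟩ |
      ⟨k₂, gC, gD, hCD1, hCD2, hCD3, hx₂', hb₂⟩ <;>
    subst hb₁ <;> subst hb₂ <;>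
    have e := (single_one_inj hx₁').symm.trans (single_one_inj hx₂')
    -- case r1 r1
    · injection e with hk hg
      injection hg with hv
      subst hk; subst hv
      have hfs : hv₁.2.toFinset = hv₂.2.toFinset := Set.Finite.toFinset_inj.mpr rfl
      rw [hfs]
      exact ⟨_, Relation.ReflGen.refl, Relation.ReflTransGen.refl⟩
    -- case r1 r2
    · injection e with hk hg
      injection hg with hv
      exact absurd (hv ▸ hv₁.2) g₂.2.1
    -- case r1 r3
    · injection e with hk hg
      cases hg
    -- case r2 r1
    · injection e with hk hg
      injection hg with hv
      exact absurd (hv ▸ hv₂.2) g₁.2.1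
    -- case r2 r2
    · injection e with hk hg
      injection hg with hv'
      subst hk
      have hvv : g₁.1.1 = g₂.1.1 := hv'
      refine ⟨u₁ + ((Finsupp.single (k₁, (Sum.inr (QGen.union g₁ g₂ hvv) : E.TalGen)) 1 : E.FreeTal) +
        E.tSum k₁ (QGen.union g₁ g₂ hvv).2.2.2.2.toFinset), ?_, ?_⟩
      · refine qstep' u₁ k₁ g₁ (QGen.union g₁ g₂ hvv) rfl Set.subset_union_left
          g₁.2.2.2.2 (QGen.union g₁ g₂ hvv).2.2.2.2 (fun e' => ?_) (fun e' he' hd => ?_)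
        · show e' ∈ g₁.1.2 ∪ g₂.1.2 ↔ e' ∈ g₁.1.2 ∨ e' ∈ (g₁.1.2 ∪ g₂.1.2) \ g₁.1.2
          simp only [Set.mem_union, Set.mem_diff, Set.mem_union]
          tauto
        · exact hd.2 he'
      · refine Relation.ReflGen.to_reflTransGen ?_
        refine qstep' u₁ k₁ g₂ (QGen.union g₁ g₂ hvv) hvv.symm Set.subset_union_right
          g₂.2.2.2.2 (QGen.union g₁ g₂ hvv).2.2.2.2 (fun e' => ?_) (fun e' he' hd => ?_)
        · show e' ∈ g₁.1.2 ∪ g₂.1.2 ↔ e' ∈ g₂.1.2 ∨ e' ∈ (g₁.1.2 ∪ g₂.1.2) \ g₂.1.2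
          simp only [Set.mem_union, Set.mem_diff, Set.mem_union]
          tauto
        · exact hd.2 he'
    -- case r2 r3
    · injection e with hk hg
      cases hg
    -- case r3 r1
    · injection e with hk hg
      cases hg
    -- case r3 r2
    · injection e with hk hg
      cases hg
    -- case r3 r3
    · injection e with hk hg
      injection hg with hgg
      subst hk
      have hgAC : gA = gC := hgg
      subst hgAC
      have hBD : gB.1.1 = gD.1.1 := hAB1.symm.trans hCD1
      set G := QGen.union gB gD hBD with hG
      have hGA : gA.1.2 ⊆ G.1.2 := hAB2.trans Set.subset_union_left
      refine ⟨u₁ + ((Finsupp.single (k₁, (Sum.inr G : E.TalGen)) 1 : E.FreeTal) +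
        E.tSum k₁ ((G.2.2.2.2.subset Set.diff_subset (t := G.1.2 \ gA.1.2)).toFinset)), ?_, ?_⟩
      · refine qstep' u₁ k₁ gB G rfl Set.subset_union_left
          (gB.2.2.2.2.subset Set.diff_subset)
          (G.2.2.2.2.subset Set.diff_subset) (fun e' => ?_) (fun e' he' hd => ?_)
        · simp only [Set.mem_diff]
          show e' ∈ gB.1.2 ∪ gD.1.2 ∧ e' ∉ gA.1.2 ↔ _
          simp only [Set.mem_union]
          constructor
          · rintro ⟨hBDm, hA⟩
            by_cases hB : e' ∈ gB.1.2
            · exact Or.inl ⟨hB, hA⟩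
            · exact Or.inr ⟨Or.elim hBDm (fun h => absurd h hB) Or.inr, hB⟩
          · rintro (⟨hB, hA⟩ | ⟨hBDm, hB⟩)
            · exact ⟨Or.inl hB, hA⟩
            · exact ⟨hBDm, fun hA => hB (hAB2 hA)⟩
        · exact hd.2 he'.1
      · refine Relation.ReflGen.to_reflTransGen ?_
        refine qstep' u₁ k₁ gD G hBD.symm Set.subset_union_right
          (gD.2.2.2.2.subset Set.diff_subset)
          (G.2.2.2.2.subset Set.diff_subset) (fun e' => ?_) (fun e' he' hd => ?_)
        · simp only [Set.mem_diff]
          show e' ∈ gB.1.2 ∪ gD.1.2 ∧ e' ∉ gA.1.2 ↔ _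
          simp only [Set.mem_union]
          constructor
          · rintro ⟨hBDm, hA⟩
            by_cases hD : e' ∈ gD.1.2
            · exact Or.inl ⟨hD, hA⟩
            · exact Or.inr ⟨Or.elim hBDm Or.inl (fun h => absurd h hD), hD⟩
          · rintro (⟨hD, hA⟩ | ⟨hBDm, hD⟩)
            · exact ⟨Or.inr hD, hA⟩
            · exact ⟨hBDm, fun hA => hD (hCD2 hA)⟩
        · exact hd.2 he'.1
  · have h1 : (1 : ℕ) ≤ u₁ p₂ := by
      have hc := congrArg (fun f => f p₂) hx₂
      simp only [Finsupp.add_apply, Finsupp.single_apply] at hc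
      simp [hpp] at hc
      omega
    obtain ⟨u₀, hu₀⟩ := exists_eq_add_single h1
    have h2 : u₀ + Finsupp.single p₁ 1 + Finsupp.single p₂ 1
        = u₂ + Finsupp.single p₂ 1 := by
      rw [← hx₂, hu₀]; abel
    have hu₂ := add_right_cancel h2
    refine ⟨u₀ + b₁ + b₂, ?_, ?_⟩
    · refine Relation.ReflGen.single ⟨u₀ + b₁, _, _, hr₂, ?_, by abel⟩
      rw [hu₀]; abel
    · refine Relation.ReflTransGen.single ⟨u₀ + b₂, _, _, hr₁, ?_, by abel⟩
      rw [← hu₂]; abel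

end CR2

section CR3

variable {E : DGraph}

theorem Steps.add_left {y d : E.FreeTal} (h : E.Steps y d) (c : E.FreeTal) :
    E.Steps (c + y) (c + d) := by
  rw [add_comm c y, add_comm c d]; exact h.add_right c

theorem steps_join {x c d : E.FreeTal} (h1 : E.Steps x c) (h2 : E.Steps x d) :
    Relation.Join E.Steps c d :=
  Relation.church_rosser (fun _ _ _ hab hac => diamond hab hac) h1 h2

/-- The additive congruence given by joinability of rewriting. -/
def joinCon (E : DGraph) : AddCon E.FreeTal where
  r := Relation.Join E.Steps
  iseqv := by
    refine ⟨fun x => ⟨x, .refl, .refl⟩, ?_, ?_⟩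
    · rintro x y ⟨c, h1, h2⟩; exact ⟨c, h2, h1⟩
    · rintro x y z ⟨c, h1, h2⟩ ⟨d, h3, h4⟩
      obtain ⟨e, he1, he2⟩ := steps_join h2 h3
      exact ⟨e, h1.trans he1, h4.trans he2⟩
  add' := by
    rintro w x y z ⟨c, h1, h2⟩ ⟨d, h3, h4⟩
    exact ⟨c + d, (h1.add_right y).trans (h3.add_left c),
      (h2.add_right z).trans (h4.add_left c)⟩

theorem talCon_of_steps {a b : E.FreeTal} (h : E.Steps a b) : E.talCon a b := by
  induction h with
  | refl => exact E.talCon.refl _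
  | tail _ hs ih =>
    obtain ⟨u, a', b', hr, hx, hy⟩ := hs
    subst hx; subst hy
    exact ih.trans (E.talCon.add (E.talCon.refl u) (AddConGen.Rel.of _ _ hr))

theorem talcon_iff_join {x y : E.FreeTal} :
    E.talCon x y ↔ Relation.Join E.Steps x y := by
  constructor
  · intro h
    have hle : E.talCon ≤ E.joinCon :=
      AddCon.addConGen_le.mpr (fun a b hr =>
        ⟨b, Relation.ReflTransGen.single ⟨0, a, b, hr, (zero_add a).symm, (zero_add b).symm⟩,
          Relation.ReflTransGen.refl⟩)
    exact hle h
  · rintro ⟨c, h1, h2⟩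
    exact (talCon_of_steps h1).trans (E.talCon.symm (talCon_of_steps h2))

theorem mk'_eq_iff_join {x y : E.FreeTal} :
    E.talCon.mk' x = E.talCon.mk' y ↔ Relation.Join E.Steps x y := by
  rw [show E.talCon.mk' x = ↑x from rfl, show E.talCon.mk' y = ↑y from rfl,
    AddCon.eq]
  exact talcon_iff_join

end CR3

section Weights

variable {E : DGraph}

/-- Sum of a weight function over a free-monoid element. -/
noncomputable def wsum (E : DGraph) (w : ℤ × E.TalGen → ℕ) : E.FreeTal →+ ℕ :=
  Finsupp.liftAddHom (fun q => AddMonoidHom.mulRight (w q))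

theorem wsum_single (w : ℤ × E.TalGen → ℕ) (q : ℤ × E.TalGen) (c : ℕ) :
    E.wsum w (Finsupp.single q c) = c * w q := by
  simp [wsum]

theorem wsum_tSum (w : ℤ × E.TalGen → ℕ) (k : ℤ) (F : Finset E.Ed) :
    E.wsum w (E.tSum k F) = ∑ e ∈ F, w (k + 1, Sum.inl (E.r e)) := by
  rw [tSum, map_sum]
  exact Finset.sum_congr rfl fun e _ => by rw [wsum_single, one_mul]

theorem wsum_eq_sum_support (w : ℤ × E.TalGen → ℕ) (x : E.FreeTal) :
    E.wsum w x = ∑ q ∈ x.support, x q * w q := by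
  classical
  rw [wsum, Finsupp.liftAddHom_apply]
  rfl

theorem one_le_tSum_apply {k : ℤ} {F : Finset E.Ed} {e : E.Ed} (he : e ∈ F) :
    1 ≤ (E.tSum k F) (k + 1, Sum.inl (E.r e)) := by
  classical
  rw [tSum, Finset.sum_apply']
  have h2 := Finset.single_le_sum
    (f := fun e' => ((Finsupp.single (k+1, (Sum.inl (E.r e') : E.TalGen)) 1 : E.FreeTal))
      (k + 1, Sum.inl (E.r e)))
    (fun i _ => Nat.zero_le _) he
  simpa using h2

theorem tSum_support {k : ℤ} {F : Finset E.Ed} {q : ℤ × E.TalGen}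
    (hq : q ∈ (E.tSum k F).support) : ∃ e ∈ F, q = (k + 1, Sum.inl (E.r e)) := by
  classical
  rw [Finsupp.mem_support_iff] at hq
  rw [tSum, Finset.sum_apply'] at hq
  obtain ⟨e, he, hne⟩ := Finset.exists_ne_zero_of_sum_ne_zero hq
  refine ⟨e, he, ?_⟩
  by_contra hne'
  exact hne (Finsupp.single_eq_of_ne' (fun h => hne' (by rw [h])))

/-- All degrees in the support are at least `m`. -/
def DegGE (E : DGraph) (m : ℤ) (x : E.FreeTal) : Prop := ∀ q ∈ x.support, m ≤ q.1

/-- All degrees in the support are at most `L`. -/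
def DegLE (E : DGraph) (L : ℤ) (x : E.FreeTal) : Prop := ∀ q ∈ x.support, q.1 ≤ L

theorem mem_support_left {x y : E.FreeTal} {q} (h : q ∈ x.support) :
    q ∈ (x + y).support := by
  rw [Finsupp.mem_support_iff] at h ⊢
  rw [Finsupp.add_apply]
  omega

theorem mem_support_right {x y : E.FreeTal} {q} (h : q ∈ y.support) :
    q ∈ (x + y).support := by
  rw [Finsupp.mem_support_iff] at h ⊢
  rw [Finsupp.add_apply]
  omega

theorem talrel_rhs_deg {a b : E.FreeTal} (h : E.TalRel a b) :
    ∃ p : ℤ × E.TalGen, a = Finsupp.single p 1 ∧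
      (∀ q ∈ b.support, q.1 = p.1 ∨ q.1 = p.1 + 1) ∧ (∃ q ∈ b.support, p.1 ≤ q.1) := by
  classical
  rcases h with ⟨k, v, hv, hx, hb⟩ | ⟨k, g, hx, hb⟩ | ⟨k, g₁, g₂, _, _, _, hx, hb⟩
  · subst hb
    refine ⟨_, hx, fun q hq => ?_, ?_⟩
    · obtain ⟨e, _, hqe⟩ := tSum_support hq
      rw [hqe]; right; rfl
    · obtain ⟨e, he⟩ := hv.1
      have heF : e ∈ hv.2.toFinset := hv.2.mem_toFinset.mpr he
      refine ⟨(k+1, Sum.inl (E.r e)), ?_, by simp⟩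
      rw [Finsupp.mem_support_iff]
      have := one_le_tSum_apply (E := E) (k := k) heF
      omega
  · subst hb
    refine ⟨_, hx, fun q hq => ?_, ?_⟩
    · rcases Finset.mem_union.mp (Finsupp.support_add hq) with hq | hq
      · have := Finsupp.support_single_subset hq
        simp only [Finset.mem_singleton] at this
        rw [this]; left; rfl
      · obtain ⟨e, _, hqe⟩ := tSum_support hq
        rw [hqe]; right; rfl
    · refine ⟨(k, Sum.inr g), mem_support_left ?_, le_refl _⟩
      classical
      rw [Finsupp.mem_support_iff, Finsupp.single_apply]; simp
  · subst hb
    refine ⟨_, hx, fun q hq => ?_, ?_⟩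
    · rcases Finset.mem_union.mp (Finsupp.support_add hq) with hq | hq
      · have := Finsupp.support_single_subset hq
        simp only [Finset.mem_singleton] at this
        rw [this]; left; rfl
      · obtain ⟨e, _, hqe⟩ := tSum_support hq
        rw [hqe]; right; rfl
    · refine ⟨(k, Sum.inr g₂), mem_support_left ?_, le_refl _⟩
      classical
      rw [Finsupp.mem_support_iff, Finsupp.single_apply]; simp

theorem DegGE.step {m : ℤ} {x y : E.FreeTal} (hs : E.Step x y) (hx : E.DegGE m x) :
    E.DegGE m y := by
  obtain ⟨u, a, b, hr, hxu, hyu⟩ := hs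
  obtain ⟨p, ha, hdeg, -⟩ := talrel_rhs_deg hr
  classical
  subst ha hxu hyu
  have hpx : m ≤ p.1 := by
    refine hx p (mem_support_right ?_)
    rw [Finsupp.mem_support_iff, Finsupp.single_apply]; simp
  intro q hq
  rcases Finset.mem_union.mp (Finsupp.support_add hq) with hq | hq
  · exact hx q (mem_support_left hq)
  · rcases hdeg q hq with h | h <;> omega

theorem DegGE.steps {m : ℤ} {x y : E.FreeTal} (hs : E.Steps x y) (hx : E.DegGE m x) :
    E.DegGE m y := by
  induction hs with
  | refl => exact hx
  | tail _ h ih => exact DegGE.step h ih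

theorem DegLE.step_back {L : ℤ} {x y : E.FreeTal} (hs : E.Step x y) (hy : E.DegLE L y) :
    E.DegLE L x := by
  obtain ⟨u, a, b, hr, hxu, hyu⟩ := hs
  obtain ⟨p, ha, hdeg, hmax⟩ := talrel_rhs_deg hr
  subst ha hxu hyu
  obtain ⟨q₀, hq₀, hq₀le⟩ := hmax
  have hpL : p.1 ≤ L := le_trans hq₀le (hy q₀ (mem_support_right hq₀))
  intro q hq
  rw [Finsupp.mem_support_iff, Finsupp.add_apply] at hq
  by_cases hu : u q ≠ 0
  · exact hy q (mem_support_left (Finsupp.mem_support_iff.mpr hu))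
  · push_neg at hu
    have hsing : (Finsupp.single p (1:ℕ)) q ≠ 0 := by omega
    have hqp : q = p := by
      by_contra hne
      exact hsing (Finsupp.single_eq_of_ne' (fun hh => hne hh.symm))
    rw [hqp]; exact hpL

theorem DegLE.steps_back {L : ℤ} {x y : E.FreeTal} (hs : E.Steps x y) (hy : E.DegLE L y) :
    E.DegLE L x := by
  induction hs with
  | refl => exact hy
  | tail _ h ih => exact ih (DegLE.step_back h hy)

end Weights

section QCnt

variable {E : DGraph}

/-- Number of q-generators at degree `j`. -/
noncomputable def qcnt (E : DGraph) (j : ℤ) : E.FreeTal →+ ℕ :=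
  E.wsum (fun q => match q.2 with
    | Sum.inl _ => 0
    | Sum.inr _ => if q.1 = j then 1 else 0)

theorem qcnt_tSum (j k : ℤ) (F : Finset E.Ed) : E.qcnt j (E.tSum k F) = 0 := by
  rw [qcnt, wsum_tSum]
  exact Finset.sum_eq_zero fun e _ => rfl

theorem qcnt_single_inl (j k : ℤ) (w : E.V) (c : ℕ) :
    E.qcnt j (Finsupp.single (k, (Sum.inl w : E.TalGen)) c) = 0 := by
  rw [qcnt, wsum_single]; rfl

theorem qcnt_single_inr (j k : ℤ) (g : E.QGen) :
    E.qcnt j (Finsupp.single (k, (Sum.inr g : E.TalGen)) 1) = if k = j then 1 else 0 := by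
  rw [qcnt, wsum_single]; simp

theorem qcnt_step_mono {j : ℤ} {x y : E.FreeTal} (hs : E.Step x y) :
    E.qcnt j x ≤ E.qcnt j y := by
  obtain ⟨u, a, b, hr, hxu, hyu⟩ := hs
  subst hxu hyu
  rw [map_add, map_add]
  have hab : E.qcnt j a ≤ E.qcnt j b := by
    rcases hr with ⟨k, v, hv, hx, hb⟩ | ⟨k, g, hx, hb⟩ | ⟨k, g₁, g₂, -, -, -, hx, hb⟩
    · subst hx; rw [qcnt_single_inl]; exact Nat.zero_le _
    · subst hx; rw [qcnt_single_inl]; exact Nat.zero_le _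
    · subst hx hb
      rw [qcnt_single_inr, map_add, qcnt_single_inr, qcnt_tSum]
      omega
  omega

theorem qcnt_steps_mono {j : ℤ} {x y : E.FreeTal} (hs : E.Steps x y) :
    E.qcnt j x ≤ E.qcnt j y := by
  induction hs with
  | refl => exact le_refl _
  | tail _ h ih => exact le_trans ih (qcnt_step_mono h)

theorem qcnt_zero_of_degGE {j N : ℤ} {x : E.FreeTal} (hx : E.DegGE N x) (hj : j < N) :
    E.qcnt j x = 0 := by
  rw [qcnt, wsum_eq_sum_support]
  refine Finset.sum_eq_zero fun q hq => ?_
  have := hx q hq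
  rcases q with ⟨k, g | g⟩
  · rfl
  · have : ¬ (k = j) := by dsimp at this ⊢; omega
    simp only [this, if_false]
    rfl

theorem steps_ne_zero {x y : E.FreeTal} (hs : E.Steps x y) (hx : x ≠ 0) : y ≠ 0 := by
  induction hs with
  | refl => exact hx
  | tail _ h _ =>
    obtain ⟨u, a, b, hr, hxu, hyu⟩ := h
    obtain ⟨p, -, -, q, hq, -⟩ := talrel_rhs_deg hr
    subst hyu
    intro h0
    have := mem_support_right (x := u) hq
    rw [h0] at this
    simp at this

theorem rewrite_occurs {c : E.FreeTal} {p : ℤ × E.TalGen} :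
    ∀ {x : E.FreeTal}, E.Steps x c → c p = 0 → 1 ≤ x p →
    ∃ u b, E.TalRel (Finsupp.single p 1) b ∧ E.Steps (u + b) c := by
  intro x h
  induction h using Relation.ReflTransGen.head_induction_on with
  | refl => intro hc hx; omega
  | head hs hrest ih =>
    intro hc hx
    obtain ⟨u, a, b, hr, hxu, hyu⟩ := hs
    obtain ⟨p', ha⟩ := talrel_lhs hr
    subst ha; subst hxu; subst hyu
    by_cases hpp : p' = p
    · subst hpp
      exact ⟨u, b, hr, hrest⟩
    · refine ih hc ?_
      have h1 : (Finsupp.single p' (1:ℕ)) p = 0 := Finsupp.single_eq_of_ne' hpp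
      rw [Finsupp.add_apply] at hx ⊢
      rw [h1] at hx
      omega

theorem rewrite_at_inl {x c : E.FreeTal} {j N : ℤ} {w : E.V}
    (h : E.Steps x c) (hN : E.DegGE N c) (hj : j < N)
    (hx : 1 ≤ x (j, Sum.inl w)) :
    E.IsRegular w ∧ ∃ y, E.Steps y c ∧ ∀ e ∈ E.emits w, 1 ≤ y (j + 1, Sum.inl (E.r e)) := by
  have hc0 : c (j, (Sum.inl w : E.TalGen)) = 0 := by
    by_contra hne
    have := hN _ (Finsupp.mem_support_iff.mpr hne)
    dsimp at this
    omega
  obtain ⟨u, b, hr, hsteps⟩ := rewrite_occurs h hc0 hx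
  rcases hr with ⟨k, v', hv', hxx, hb⟩ | ⟨k, g, hxx, hb⟩ | ⟨k, g₁, g₂, -, -, -, hxx, hb⟩
  · have hp := single_one_inj hxx
    injection hp with hk hg
    injection hg with hw
    subst hk; subst hw; subst hb
    refine ⟨hv', u + E.tSum j hv'.2.toFinset, hsteps, fun e he => ?_⟩
    rw [Finsupp.add_apply]
    have := one_le_tSum_apply (E := E) (k := j) (hv'.2.mem_toFinset.mpr he)
    omega
  · have hp := single_one_inj hxx
    injection hp with hk hg
    subst hk; subst hb
    exfalso
    have h1 : 1 ≤ E.qcnt j (u + ((Finsupp.single (j, (Sum.inr g : E.TalGen)) 1 : E.FreeTal) + E.tSum j g.2.2.2.2.toFinset)) := by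
      rw [map_add, map_add, qcnt_single_inr, qcnt_tSum]
      simp
    have h2 := qcnt_steps_mono (j := j) hsteps
    have h3 := qcnt_zero_of_degGE hN hj
    omega
  · have hp := single_one_inj hxx
    injection hp with hk hg
    cases hg

end QCnt

section Reg

variable {E : DGraph}

/-- Reachability in fewer than `m` steps. -/
inductive ReachLt (E : DGraph) : ℕ → E.V → E.V → Prop
  | refl (m : ℕ) (u : E.V) : ReachLt E (m+1) u u
  | step {m : ℕ} {u w : E.V} (e : E.Ed) (hs : E.s e = u)
      (h : ReachLt E m (E.r e) w) : ReachLt E (m+1) u w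

theorem reachLt_of_reaches {u w : E.V} (h : E.Reaches u w) : ∃ m, E.ReachLt m u w := by
  induction h using Relation.ReflTransGen.head_induction_on with
  | refl => exact ⟨1, ReachLt.refl 0 _⟩
  | head hadj _ ih =>
    obtain ⟨m, hm⟩ := ih
    obtain ⟨e, hse, hre⟩ := hadj
    exact ⟨m + 1, ReachLt.step e hse (by rw [hre]; exact hm)⟩

theorem reg_main {c : E.FreeTal} {N : ℤ} (hNc : E.DegGE N c) :
    ∀ (m : ℕ) (x : E.FreeTal) (j : ℤ) (w : E.V), E.Steps x c →
      1 ≤ x (j, Sum.inl w) → j + (m:ℤ) ≤ N → ∀ u, E.ReachLt m w u → E.IsRegular u := by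
  intro m
  induction m with
  | zero =>
    intro x j w _ _ _ u hu
    cases hu
  | succ m ih =>
    intro x j w hsx hx hjm u hu
    have hjN : j < N := by push_cast at hjm; omega
    obtain ⟨hreg, y, hys, hcoeff⟩ := rewrite_at_inl hsx hNc hjN hx
    cases hu with
    | refl => exact hreg
    | step e hse hrest =>
      exact ih y (j+1) (E.r e) hys (hcoeff e hse) (by push_cast at hjm ⊢; omega) u hrest

theorem shiftT_mk' (n : ℤ) (x : E.FreeTal) :
    E.shiftT n (E.talCon.mk' x) = E.talCon.mk' (E.shiftF n x) := rfl

theorem exists_period_iterate {v : E.V} {n : ℤ} (hn : E.shiftT n (E.tv v) = E.tv v) (k : ℕ) :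
    E.talCon.mk' (Finsupp.single (((k:ℤ) * n), (Sum.inl v : E.TalGen)) 1)
      = E.talCon.mk' (Finsupp.single ((0:ℤ), (Sum.inl v : E.TalGen)) 1) := by
  induction k with
  | zero => norm_num
  | succ k ih =>
    have h2 : E.shiftT ((k:ℤ)*n) (E.shiftT n (E.tv v)) = E.shiftT ((k:ℤ)*n) (E.tv v) := by
      rw [hn]
    rw [tv, shiftT_mk', shiftF_single, shiftT_mk', shiftF_single, shiftT_mk',
      shiftF_single] at h2
    have harith : ((k:ℤ)+1) * n = 0 + n + (k:ℤ)*n := by ring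
    push_cast
    rw [harith, h2]
    rw [show (0:ℤ) + (k:ℤ)*n = (k:ℤ)*n by ring]
    exact ih

theorem tree_regular {v : E.V} (hv0 : E.TPeriodic (E.tv v)) :
    ∀ u, E.Reaches v u → E.IsRegular u := by
  obtain ⟨hne, n, hn, hper⟩ := hv0
  intro u hru
  obtain ⟨m, hm⟩ := reachLt_of_reaches hru
  have hkey := exists_period_iterate hper m
  obtain ⟨c, h1, h2⟩ := mk'_eq_iff_join.mp hkey
  have hNc : E.DegGE ((m:ℤ)*n) c := by
    refine DegGE.steps h1 ?_
    intro q hq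
    have hss := Finsupp.support_single_subset hq
    simp only [Finset.mem_singleton] at hss
    rw [hss]
  refine reg_main hNc m _ 0 v h2 ?_ ?_ u hm
  · simp
  · have h3 : (1:ℤ) ≤ n := hn
    have h4 : (m:ℤ) * 1 ≤ (m:ℤ)*n := by
      refine mul_le_mul_of_nonneg_left h3 (by positivity)
    omega

end Reg

section Pcnt

variable {E : DGraph}

open Classical in
/-- The number of paths of length `j` from `u` to `w`. -/
noncomputable def pcnt (E : DGraph) : ℕ → E.V → E.V → ℕ
  | 0, u, w => if u = w then 1 else 0
  | (j+1), u, w =>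
    if h : (E.emits u).Finite then ∑ e ∈ h.toFinset, E.pcnt j (E.r e) w else 0

open Classical in
theorem pcnt_zero (u w : E.V) : E.pcnt 0 u w = if u = w then 1 else 0 := by
  simp [pcnt]

theorem pcnt_succ_reg {u : E.V} (h : (E.emits u).Finite) (j : ℕ) (w : E.V) :
    E.pcnt (j+1) u w = ∑ e ∈ h.toFinset, E.pcnt j (E.r e) w := by
  rw [pcnt, dif_pos h]

theorem pcnt_zero_self (u : E.V) : E.pcnt 0 u u = 1 := by
  rw [pcnt_zero, if_pos rfl]

theorem pcnt_supp_finite (j : ℕ) (u : E.V) : {w | E.pcnt j u w ≠ 0}.Finite := by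
  induction j generalizing u with
  | zero =>
    refine Set.Finite.subset (Set.finite_singleton u) ?_
    intro w hw
    rw [Set.mem_setOf_eq, pcnt_zero] at hw
    by_contra hne
    simp only [Set.mem_singleton_iff] at hne
    exact hw (if_neg (fun h => hne h.symm))
  | succ j ih =>
    by_cases h : (E.emits u).Finite
    · refine Set.Finite.subset
        (Set.Finite.biUnion (h.toFinset.finite_toSet)
          (fun e _ => ih (E.r e))) ?_
      intro w hw
      rw [Set.mem_setOf_eq, pcnt_succ_reg h] at hw
      obtain ⟨e, he, hne⟩ := Finset.exists_ne_zero_of_sum_ne_zero hw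
      exact Set.mem_biUnion he hne
    · refine Set.Finite.subset (Set.finite_empty) ?_
      intro w hw
      rw [Set.mem_setOf_eq, pcnt, dif_neg h] at hw
      exact absurd rfl hw

theorem pcnt_reaches {j : ℕ} {u w : E.V} (h : E.pcnt j u w ≠ 0) : E.Reaches u w := by
  induction j generalizing u with
  | zero =>
    rw [pcnt_zero] at h
    by_cases he : u = w
    · exact he ▸ Relation.ReflTransGen.refl
    · exact absurd (if_neg he) h
  | succ j ih =>
    by_cases hf : (E.emits u).Finite
    · rw [pcnt_succ_reg hf] at h
      obtain ⟨e, he, hne⟩ := Finset.exists_ne_zero_of_sum_ne_zero h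
      refine Relation.ReflTransGen.head ⟨e, hf.mem_toFinset.mp he, rfl⟩ (ih hne)
    · rw [pcnt, dif_neg hf] at h
      exact absurd rfl h

/-- The weighted path-count evaluation at level `L`, target `w`. -/
noncomputable def phiW (E : DGraph) (L : ℤ) (w : E.V) : E.FreeTal →+ ℕ :=
  E.wsum (fun q => match q.2 with
    | Sum.inl u => if 0 ≤ q.1 ∧ q.1 ≤ L then E.pcnt (L - q.1).toNat u w else 0
    | Sum.inr _ => 0)

theorem phiW_single_inl {L k : ℤ} (hk : 0 ≤ k) (hkL : k ≤ L) (u w : E.V) (c : ℕ) :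
    E.phiW L w (Finsupp.single (k, (Sum.inl u : E.TalGen)) c)
      = c * E.pcnt (L - k).toNat u w := by
  rw [phiW, wsum_single]
  simp only [if_pos (And.intro hk hkL)]

/-- Elements whose support consists of nonnegative-degree vertex generators in the
tree of `v`. -/
def Good (E : DGraph) (v : E.V) (x : E.FreeTal) : Prop :=
  ∀ q ∈ x.support, 0 ≤ q.1 ∧ ∃ u, q.2 = Sum.inl u ∧ E.Reaches v u

theorem good_single {v u : E.V} {m : ℤ} (hm : 0 ≤ m) (h : E.Reaches v u) :
    E.Good v (Finsupp.single (m, (Sum.inl u : E.TalGen)) 1) := by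
  intro q hq
  have hss := Finsupp.support_single_subset hq
  simp only [Finset.mem_singleton] at hss
  subst hss
  exact ⟨hm, u, rfl, h⟩

theorem Good.step {v : E.V} {x y : E.FreeTal}
    (hreg : ∀ u, E.Reaches v u → E.IsRegular u)
    (hg : E.Good v x) (hs : E.Step x y) : E.Good v y := by
  classical
  obtain ⟨u, a, b, hr, hxu, hyu⟩ := hs
  rcases hr with ⟨k, v', hv', hxx, hb⟩ | ⟨k, g, hxx, hb⟩ | ⟨k, g₁, g₂, -, -, -, hxx, hb⟩
  · subst hxx hb hxu hyu
    have hp : (0:ℤ) ≤ k ∧ E.Reaches v v' := by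
      have := hg (k, Sum.inl v') (mem_support_right (by
        rw [Finsupp.mem_support_iff, Finsupp.single_apply]; simp))
      obtain ⟨h0, u', hu', hru'⟩ := this
      injection hu' with hu'
      exact ⟨h0, hu' ▸ hru'⟩
    intro q hq
    rcases Finset.mem_union.mp (Finsupp.support_add hq) with hq | hq
    · exact hg q (mem_support_left hq)
    · obtain ⟨e, he, hqe⟩ := tSum_support hq
      subst hqe
      refine ⟨by omega, E.r e, rfl, hp.2.tail ⟨e, hv'.2.mem_toFinset.mp he, rfl⟩⟩
  · exfalso
    subst hxx hxu
    have := hg (k, Sum.inl g.1.1) (mem_support_right (by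
      rw [Finsupp.mem_support_iff, Finsupp.single_apply]; simp))
    obtain ⟨-, u', hu', hru'⟩ := this
    injection hu' with hu'
    exact g.2.1 (by rw [hu']; exact (hreg u' hru').2)
  · exfalso
    subst hxx hxu
    have := hg (k, Sum.inr g₁) (mem_support_right (by
      rw [Finsupp.mem_support_iff, Finsupp.single_apply]; simp))
    obtain ⟨-, u', hu', -⟩ := this
    cases hu'

theorem Good.steps {v : E.V} {x y : E.FreeTal}
    (hreg : ∀ u, E.Reaches v u → E.IsRegular u)
    (hg : E.Good v x) (hs : E.Steps x y) : E.Good v y := by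
  induction hs with
  | refl => exact hg
  | tail _ h ih => exact ih.step hreg h

theorem phi_step {v : E.V} {x y : E.FreeTal} {L : ℤ}
    (hreg : ∀ u, E.Reaches v u → E.IsRegular u)
    (hg : E.Good v x) (hs : E.Step x y) (hy : E.DegLE L y) (w : E.V) :
    E.phiW L w x = E.phiW L w y := by
  classical
  obtain ⟨u, a, b, hr, hxu, hyu⟩ := hs
  rcases hr with ⟨k, v', hv', hxx, hb⟩ | ⟨k, g, hxx, hb⟩ | ⟨k, g₁, g₂, -, -, -, hxx, hb⟩
  · subst hxx hb hxu hyu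
    have hp : (0:ℤ) ≤ k := by
      have := hg (k, Sum.inl v') (mem_support_right (by
        rw [Finsupp.mem_support_iff, Finsupp.single_apply]; simp))
      exact this.1
    have hkL : k + 1 ≤ L := by
      obtain ⟨e₀, he₀⟩ := hv'.1
      have he₀F : e₀ ∈ hv'.2.toFinset := hv'.2.mem_toFinset.mpr he₀
      refine hy (k+1, Sum.inl (E.r e₀)) (mem_support_right ?_)
      rw [Finsupp.mem_support_iff]
      have := one_le_tSum_apply (E := E) (k := k) he₀F
      omega
    rw [map_add, map_add]
    congr 1
    rw [phiW_single_inl hp (by omega), one_mul]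
    rw [phiW, wsum_tSum]
    have harith : (L - k).toNat = (L - (k+1)).toNat + 1 := by omega
    rw [harith, pcnt_succ_reg hv'.2]
    refine Finset.sum_congr rfl fun e he => ?_
    show E.pcnt (L - (k + 1)).toNat (E.r e) w
      = if 0 ≤ k + 1 ∧ k + 1 ≤ L then E.pcnt (L - (k+1)).toNat (E.r e) w else 0
    rw [if_pos (show (0:ℤ) ≤ k + 1 ∧ k + 1 ≤ L by constructor <;> omega)]
  · exfalso
    subst hxx hxu
    have := hg (k, Sum.inl g.1.1) (mem_support_right (by
      rw [Finsupp.mem_support_iff, Finsupp.single_apply]; simp))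
    obtain ⟨-, u', hu', hru'⟩ := this
    injection hu' with hu'
    exact g.2.1 (by rw [hu']; exact (hreg u' hru').2)
  · exfalso
    subst hxx hxu
    have := hg (k, Sum.inr g₁) (mem_support_right (by
      rw [Finsupp.mem_support_iff, Finsupp.single_apply]; simp))
    obtain ⟨-, u', hu', -⟩ := this
    cases hu'

theorem phi_steps {v : E.V} {x z : E.FreeTal} {L : ℤ}
    (hreg : ∀ u, E.Reaches v u → E.IsRegular u)
    (hg : E.Good v x) (hs : E.Steps x z) (hz : E.DegLE L z) (w : E.V) :
    E.phiW L w x = E.phiW L w z := by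
  induction hs with
  | refl => rfl
  | tail hxy hstep ih =>
    exact (ih (DegLE.step_back hstep hz)).trans
      (phi_step hreg (hg.steps hreg hxy) hstep hz w)

end Pcnt

section Periodicity

variable {E : DGraph}

theorem periodic_struct {v : E.V} (hper : E.TPeriodic (E.tv v)) :
    (∀ u, E.Reaches v u → E.IsRegular u) ∧
    ∃ n M : ℕ, 0 < n ∧ ∀ l : ℕ, M ≤ l → ∀ w, E.pcnt (l + n) v w = E.pcnt l v w := by
  have hreg := tree_regular hper
  refine ⟨hreg, ?_⟩
  obtain ⟨hne, n, hn, hp⟩ := hper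
  have hkey := exists_period_iterate hp 1
  rw [show ((1:ℕ):ℤ) * n = n by push_cast; ring] at hkey
  obtain ⟨c, h1, h2⟩ := mk'_eq_iff_join.mp hkey
  have hc0 : c ≠ 0 := by
    refine steps_ne_zero h2 ?_
    simp only [ne_eq, Finsupp.single_eq_zero]
    exact one_ne_zero
  have hGEn : E.DegGE n c := by
    refine DegGE.steps h1 ?_
    intro q hq
    have hss := Finsupp.support_single_subset hq
    simp only [Finset.mem_singleton] at hss
    rw [hss]
  set L₀ : ℕ := c.support.sup (fun q => q.1.toNat) with hL₀
  have hLE : ∀ q ∈ c.support, q.1 ≤ (L₀ : ℤ) := by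
    intro q hq
    have h1' : q.1 ≤ (q.1.toNat : ℤ) := Int.self_le_toNat _
    have h2' : q.1.toNat ≤ L₀ := Finset.le_sup (f := fun q => q.1.toNat) hq
    omega
  refine ⟨n.toNat, L₀, by omega, fun l hl w => ?_⟩
  set L : ℤ := (l : ℤ) + n with hLdef
  have hDegLE : E.DegLE L c := by
    intro q hq
    have := hLE q hq
    omega
  have e1 := phi_steps hreg (good_single le_rfl Relation.ReflTransGen.refl) h2 hDegLE w
  have e2 := phi_steps hreg (good_single (le_of_lt hn) Relation.ReflTransGen.refl) h1 hDegLE w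
  rw [phiW_single_inl le_rfl (by omega)] at e1
  rw [phiW_single_inl (le_of_lt hn) (by omega)] at e2
  rw [one_mul] at e1 e2
  have hx1 : (L - 0).toNat = l + n.toNat := by omega
  have hx2 : (L - n).toNat = l := by omega
  rw [hx1] at e1
  rw [hx2] at e2
  rw [e1, e2]

end Periodicity

section Endgame

variable {E : DGraph}

open Classical in
/-- The number of edges from `u` to `w`. -/
noncomputable def ecnt (E : DGraph) (u w : E.V) : ℕ :=
  if h : (E.emits u).Finite then (h.toFinset.filter (fun e => E.r e = w)).card else 0

open Classical in
/-- The out-degree of `u`. -/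
noncomputable def odeg (E : DGraph) (u : E.V) : ℕ :=
  if h : (E.emits u).Finite then h.toFinset.card else 0

open Classical in
theorem ecnt_eq {u : E.V} (h : (E.emits u).Finite) (w : E.V) :
    E.ecnt u w = (h.toFinset.filter (fun e => E.r e = w)).card := by
  classical
  rw [ecnt, dif_pos h]

theorem odeg_eq {u : E.V} (h : (E.emits u).Finite) : E.odeg u = h.toFinset.card := by
  rw [odeg, dif_pos h]

theorem one_le_ecnt {u : E.V} (h : (E.emits u).Finite) {e : E.Ed} (he : e ∈ E.emits u) :
    1 ≤ E.ecnt u (E.r e) := by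
  classical
  rw [ecnt_eq h]
  refine Finset.card_pos.mpr ⟨e, Finset.mem_filter.mpr ⟨h.mem_toFinset.mpr he, rfl⟩⟩

theorem pcnt_back {v : E.V} (hreg : ∀ u, E.Reaches v u → E.IsRegular u) :
    ∀ (j : ℕ) (u : E.V), E.Reaches v u → ∀ (A : Finset E.V),
      (∀ w', E.pcnt j u w' ≠ 0 → w' ∈ A) → ∀ w,
      E.pcnt (j+1) u w = ∑ w' ∈ A, E.pcnt j u w' * E.ecnt w' w := by
  intro j
  induction j with
  | zero =>
    intro u hu A hA w
    classical
    have hfin := (hreg u hu).2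
    rw [pcnt_succ_reg hfin]
    have hLHS : ∑ e ∈ hfin.toFinset, E.pcnt 0 (E.r e) w = E.ecnt u w := by
      rw [ecnt_eq hfin, Finset.card_filter]
      refine Finset.sum_congr rfl fun e _ => ?_
      rw [pcnt_zero]
    rw [hLHS]
    have hRHS : ∀ w' ∈ A, E.pcnt 0 u w' * E.ecnt w' w
        = if u = w' then E.ecnt w' w else 0 := by
      intro w' _
      rw [pcnt_zero]
      by_cases h : u = w' <;> simp [h]
    rw [Finset.sum_congr rfl hRHS, Finset.sum_ite_eq A u (fun w' => E.ecnt w' w),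
      if_pos (hA u (by rw [pcnt_zero_self]; omega))]
  | succ j ih =>
    intro u hu A hA w
    classical
    have hfin := (hreg u hu).2
    rw [pcnt_succ_reg hfin]
    have hterm : ∀ e ∈ hfin.toFinset, E.pcnt (j+1) (E.r e) w
        = ∑ w' ∈ A, E.pcnt j (E.r e) w' * E.ecnt w' w := by
      intro e he
      refine ih (E.r e) (hu.tail ⟨e, hfin.mem_toFinset.mp he, rfl⟩) A (fun w' hw' => ?_) w
      refine hA w' ?_
      rw [pcnt_succ_reg hfin]
      have hle := Finset.single_le_sum (f := fun e' => E.pcnt j (E.r e') w')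
        (fun _ _ => Nat.zero_le _) he
      omega
    rw [Finset.sum_congr rfl hterm, Finset.sum_comm]
    refine Finset.sum_congr rfl fun w' _ => ?_
    rw [← Finset.sum_mul, ← pcnt_succ_reg hfin]

/-- The (finite) set of endpoints of length-`l` paths from `v`. -/
noncomputable def Sfin (E : DGraph) (v : E.V) (l : ℕ) : Finset E.V :=
  (pcnt_supp_finite (E := E) l v).toFinset

theorem mem_Sfin {v w : E.V} {l : ℕ} : w ∈ E.Sfin v l ↔ E.pcnt l v w ≠ 0 := by
  rw [Sfin, Set.Finite.mem_toFinset, Set.mem_setOf_eq]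

/-- The number of length-`l` paths from `v`. -/
noncomputable def Ptot (E : DGraph) (v : E.V) (l : ℕ) : ℕ :=
  ∑ w ∈ E.Sfin v l, E.pcnt l v w

theorem pcnt_back' {v : E.V} (hreg : ∀ u, E.Reaches v u → E.IsRegular u) (l : ℕ) (w : E.V) :
    E.pcnt (l+1) v w = ∑ w' ∈ E.Sfin v l, E.pcnt l v w' * E.ecnt w' w :=
  pcnt_back hreg l v Relation.ReflTransGen.refl _ (fun _ h => mem_Sfin.mpr h) w

theorem range_mem_Sfin {v w' : E.V} {l : ℕ}
    (hreg : ∀ u, E.Reaches v u → E.IsRegular u)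
    (hw' : w' ∈ E.Sfin v l) {e : E.Ed} (he : e ∈ E.emits w') :
    E.r e ∈ E.Sfin v (l+1) := by
  have hfin := (hreg w' (pcnt_reaches (mem_Sfin.mp hw'))).2
  rw [mem_Sfin, pcnt_back' hreg l]
  have h1 : 1 ≤ E.pcnt l v w' * E.ecnt w' (E.r e) :=
    Nat.one_le_iff_ne_zero.mpr (Nat.mul_ne_zero (mem_Sfin.mp hw')
      (Nat.one_le_iff_ne_zero.mp (one_le_ecnt hfin he)))
  have hle := Finset.single_le_sum
    (f := fun w'' => E.pcnt l v w'' * E.ecnt w'' (E.r e)) (fun _ _ => Nat.zero_le _) hw'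
  omega

theorem Ptot_succ {v : E.V} (hreg : ∀ u, E.Reaches v u → E.IsRegular u) (l : ℕ) :
    E.Ptot v (l+1) = ∑ w' ∈ E.Sfin v l, E.pcnt l v w' * E.odeg w' := by
  classical
  rw [Ptot]
  rw [Finset.sum_congr rfl (fun w _ => pcnt_back' hreg l w), Finset.sum_comm]
  refine Finset.sum_congr rfl fun w' hw' => ?_
  rw [← Finset.mul_sum]
  congr 1
  have hfin := (hreg w' (pcnt_reaches (mem_Sfin.mp hw'))).2
  rw [odeg_eq hfin]
  rw [Finset.sum_congr rfl (fun w _ => ecnt_eq hfin w)]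
  exact (Finset.card_eq_sum_card_fiberwise
    (fun e he => range_mem_Sfin hreg hw' (hfin.mem_toFinset.mp he))).symm

theorem one_le_odeg {v w' : E.V} (hreg : ∀ u, E.Reaches v u → E.IsRegular u)
    (hr : E.Reaches v w') : 1 ≤ E.odeg w' := by
  have hfin := (hreg w' hr).2
  rw [odeg_eq hfin]
  obtain ⟨e, he⟩ := (hreg w' hr).1
  exact Finset.card_pos.mpr ⟨e, hfin.mem_toFinset.mpr he⟩

theorem Ptot_mono_succ {v : E.V} (hreg : ∀ u, E.Reaches v u → E.IsRegular u) (l : ℕ) :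
    E.Ptot v l ≤ E.Ptot v (l+1) := by
  rw [Ptot_succ hreg l, Ptot]
  refine Finset.sum_le_sum fun w' hw' => ?_
  have := one_le_odeg hreg (pcnt_reaches (mem_Sfin.mp hw'))
  nlinarith

theorem Ptot_mono {v : E.V} (hreg : ∀ u, E.Reaches v u → E.IsRegular u) {a b : ℕ}
    (h : a ≤ b) : E.Ptot v a ≤ E.Ptot v b := by
  obtain ⟨k, rfl⟩ := Nat.exists_eq_add_of_le h
  clear h
  induction k with
  | zero => simp
  | succ k ih =>
    exact le_trans ih (Ptot_mono_succ hreg (a + k))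

theorem odeg_one_of_Ptot_eq {v : E.V} (hreg : ∀ u, E.Reaches v u → E.IsRegular u)
    {l : ℕ} (heq : E.Ptot v (l+1) = E.Ptot v l) :
    ∀ w' ∈ E.Sfin v l, E.odeg w' = 1 := by
  rw [Ptot_succ hreg l, Ptot] at heq
  have hle : ∀ w' ∈ E.Sfin v l, E.pcnt l v w' ≤ E.pcnt l v w' * E.odeg w' := by
    intro w' hw'
    have := one_le_odeg hreg (pcnt_reaches (mem_Sfin.mp hw'))
    nlinarith
  have hpt := (Finset.sum_eq_sum_iff_of_le hle).mp heq.symm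
  intro w' hw'
  have h1 := hpt w' hw'
  have h2 : E.pcnt l v w' ≠ 0 := mem_Sfin.mp hw'
  have h3 := one_le_odeg hreg (pcnt_reaches h2)
  by_contra hne
  have h4 : 2 ≤ E.odeg w' := by omega
  have h5 : E.pcnt l v w' * 2 ≤ E.pcnt l v w' * E.odeg w' := Nat.mul_le_mul_left _ h4
  omega

end Endgame

section Sigma

variable {E : DGraph}

open Classical in
/-- The successor map on out-degree-one vertices. -/
noncomputable def sigma (E : DGraph) (u : E.V) : E.V :=
  if h : ∃ e, E.emits u = {e} then E.r h.choose else u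

theorem sigma_eq {u : E.V} {e : E.Ed} (h : E.emits u = {e}) : E.sigma u = E.r e := by
  rw [sigma, dif_pos ⟨e, h⟩]
  congr 1
  have h2 := (⟨e, h⟩ : ∃ e', E.emits u = {e'}).choose_spec
  exact (Set.singleton_eq_singleton_iff.mp (h.symm.trans h2)).symm

theorem mem_emits_of_singleton {u : E.V} {e : E.Ed} (h : E.emits u = {e}) : E.s e = u := by
  have : e ∈ E.emits u := by rw [h]; exact rfl
  exact this

theorem emits_singleton_of_odeg_one {w : E.V} (hfin : (E.emits w).Finite)
    (h1 : E.odeg w = 1) : ∃ e, E.emits w = {e} := by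
  rw [odeg_eq hfin] at h1
  obtain ⟨e, he⟩ := Finset.card_eq_one.mp h1
  refine ⟨e, ?_⟩
  ext x
  rw [← hfin.mem_toFinset, he, Finset.mem_singleton, Set.mem_singleton_iff]

variable {v : E.V} {n M : ℕ}

theorem hS_per (hdag : ∀ l, M ≤ l → ∀ w, E.pcnt (l + n) v w = E.pcnt l v w)
    {l : ℕ} (hl : M ≤ l) : E.Sfin v (l + n) = E.Sfin v l := by
  ext w
  rw [mem_Sfin, mem_Sfin, hdag l hl w]

theorem hP_per (hdag : ∀ l, M ≤ l → ∀ w, E.pcnt (l + n) v w = E.pcnt l v w)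
    {l : ℕ} (hl : M ≤ l) : E.Ptot v (l + n) = E.Ptot v l := by
  rw [Ptot, Ptot, hS_per hdag hl]
  exact Finset.sum_congr rfl fun w _ => hdag l hl w

theorem hPconst_per (hreg : ∀ u, E.Reaches v u → E.IsRegular u) (hn : 0 < n)
    (hdag : ∀ l, M ≤ l → ∀ w, E.pcnt (l + n) v w = E.pcnt l v w)
    {l : ℕ} (hl : M ≤ l) : E.Ptot v (l + 1) = E.Ptot v l := by
  refine le_antisymm ?_ (Ptot_mono_succ hreg l)
  calc E.Ptot v (l+1) ≤ E.Ptot v (l + n) := Ptot_mono hreg (by omega)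
  _ = E.Ptot v l := hP_per hdag hl

theorem hsing_per (hreg : ∀ u, E.Reaches v u → E.IsRegular u) (hn : 0 < n)
    (hdag : ∀ l, M ≤ l → ∀ w, E.pcnt (l + n) v w = E.pcnt l v w)
    {l : ℕ} (hl : M ≤ l) {w : E.V} (hw : w ∈ E.Sfin v l) :
    ∃ e, E.emits w = {e} :=
  emits_singleton_of_odeg_one
    ((hreg w (pcnt_reaches (mem_Sfin.mp hw))).2)
    (odeg_one_of_Ptot_eq hreg (hPconst_per hreg hn hdag hl) w hw)

theorem hstep_per (hreg : ∀ u, E.Reaches v u → E.IsRegular u) (hn : 0 < n)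
    (hdag : ∀ l, M ≤ l → ∀ w, E.pcnt (l + n) v w = E.pcnt l v w)
    {l : ℕ} (hl : M ≤ l) {w : E.V} (hw : w ∈ E.Sfin v l) :
    E.sigma w ∈ E.Sfin v (l + 1) := by
  obtain ⟨e, he⟩ := hsing_per hreg hn hdag hl hw
  rw [sigma_eq he]
  exact range_mem_Sfin hreg hw (by rw [he]; exact rfl)

theorem hiter_per (hreg : ∀ u, E.Reaches v u → E.IsRegular u) (hn : 0 < n)
    (hdag : ∀ l, M ≤ l → ∀ w, E.pcnt (l + n) v w = E.pcnt l v w)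
    (i : ℕ) {l : ℕ} (hl : M ≤ l) {w : E.V} (hw : w ∈ E.Sfin v l) :
    E.sigma^[i] w ∈ E.Sfin v (l + i) := by
  induction i with
  | zero => exact hw
  | succ i ih =>
    rw [Function.iterate_succ_apply', show l + (i+1) = (l + i) + 1 from rfl]
    exact hstep_per hreg hn hdag (by omega) ih

theorem hback_per (hreg : ∀ u, E.Reaches v u → E.IsRegular u) (hn : 0 < n)
    (hdag : ∀ l, M ≤ l → ∀ w, E.pcnt (l + n) v w = E.pcnt l v w)
    {l : ℕ} (hl : M ≤ l) {w : E.V} (hw : w ∈ E.Sfin v (l + 1)) :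
    ∃ w' ∈ E.Sfin v l, E.sigma w' = w := by
  classical
  have hne : E.pcnt (l+1) v w ≠ 0 := mem_Sfin.mp hw
  rw [pcnt_back' hreg l] at hne
  obtain ⟨w', hw', hprod⟩ := Finset.exists_ne_zero_of_sum_ne_zero hne
  refine ⟨w', hw', ?_⟩
  have hecnt : E.ecnt w' w ≠ 0 := by
    intro h0
    refine hprod ?_
    show E.pcnt l v w' * E.ecnt w' w = 0
    rw [h0, Nat.mul_zero]
  have hfin := (hreg w' (pcnt_reaches (mem_Sfin.mp hw'))).2
  rw [ecnt_eq hfin] at hecnt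
  obtain ⟨e, he⟩ := Finset.card_pos.mp (Nat.pos_of_ne_zero hecnt)
  obtain ⟨he1, he2⟩ := Finset.mem_filter.mp he
  obtain ⟨e₀, he₀⟩ := hsing_per hreg hn hdag hl hw'
  have hee : e = e₀ := by
    have hmem := hfin.mem_toFinset.mp he1
    rw [he₀] at hmem
    exact hmem
  rw [sigma_eq he₀, ← hee, he2]

theorem hbackIter_per (hreg : ∀ u, E.Reaches v u → E.IsRegular u) (hn : 0 < n)
    (hdag : ∀ l, M ≤ l → ∀ w, E.pcnt (l + n) v w = E.pcnt l v w)
    (k : ℕ) {w : E.V} (hw : w ∈ E.Sfin v (M + k)) :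
    ∃ w' ∈ E.Sfin v M, E.sigma^[k] w' = w := by
  induction k generalizing w with
  | zero => exact ⟨w, hw, rfl⟩
  | succ k ih =>
    obtain ⟨w'', hw'', hsw⟩ := hback_per hreg hn hdag (l := M + k) (by omega) hw
    obtain ⟨w', hw', hit⟩ := ih hw''
    exact ⟨w', hw', by rw [Function.iterate_succ_apply', hit, hsw]⟩

theorem exists_periodic_point (hreg : ∀ u, E.Reaches v u → E.IsRegular u) (hn : 0 < n)
    (hdag : ∀ l, M ≤ l → ∀ w, E.pcnt (l + n) v w = E.pcnt l v w)
    {w : E.V} (hw : w ∈ E.Sfin v M) :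
    ∃ N, 0 < N ∧ E.sigma^[N] w = w := by
  classical
  have hmaps : ∀ x, x ∈ E.Sfin v M → E.sigma^[n] x ∈ E.Sfin v M := by
    intro x hx
    have := hiter_per hreg hn hdag n le_rfl hx
    rwa [hS_per hdag le_rfl] at this
  have hsurj : ∀ x ∈ E.Sfin v M, ∃ x' ∈ E.Sfin v M, E.sigma^[n] x' = x := by
    intro x hx
    refine hbackIter_per hreg hn hdag n ?_
    rwa [hS_per hdag le_rfl]
  let α := {x // x ∈ E.Sfin v M}
  let F : α → α := fun x => ⟨E.sigma^[n] x.1, hmaps x.1 x.2⟩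
  have hFsurj : Function.Surjective F := by
    intro y
    obtain ⟨x', hx', hfx⟩ := hsurj y.1 y.2
    exact ⟨⟨x', hx'⟩, Subtype.ext hfx⟩
  have hFinj : Function.Injective F := Finite.injective_iff_surjective.mpr hFsurj
  have hval : ∀ (m : ℕ) (x : α), (F^[m] x).1 = E.sigma^[m * n] x.1 := by
    intro m
    induction m with
    | zero => intro x; rw [Nat.zero_mul]; rfl
    | succ m ih =>
      intro x
      rw [Function.iterate_succ_apply']
      show E.sigma^[n] ((F^[m] x)).1 = _
      rw [ih x, ← Function.iterate_add_apply, show n + m * n = (m+1) * n by ring]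
  obtain ⟨a, b, hab, heq⟩ :=
    Finite.exists_ne_map_eq_of_infinite (fun i : ℕ => F^[i] (⟨w, hw⟩ : α))
  rcases Nat.lt_or_ge a b with hlt | hge
  · have h2 : F^[a] (F^[b - a] ⟨w, hw⟩) = F^[a] ⟨w, hw⟩ := by
      rw [← Function.iterate_add_apply, show a + (b - a) = b by omega]
      exact heq.symm
    have h3 := hFinj.iterate a h2
    refine ⟨(b - a) * n, Nat.mul_pos (by omega) hn, ?_⟩
    have h4 := congrArg Subtype.val h3
    rw [hval (b-a) ⟨w, hw⟩] at h4
    exact h4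
  · have hlt : b < a := by omega
    have h2 : F^[b] (F^[a - b] ⟨w, hw⟩) = F^[b] ⟨w, hw⟩ := by
      rw [← Function.iterate_add_apply, show b + (a - b) = a by omega]
      exact heq
    have h3 := hFinj.iterate b h2
    refine ⟨(a - b) * n, Nat.mul_pos (by omega) hn, ?_⟩
    have h4 := congrArg Subtype.val h3
    rw [hval (a-b) ⟨w, hw⟩] at h4
    exact h4

theorem iterate_sing (hreg : ∀ u, E.Reaches v u → E.IsRegular u) (hn : 0 < n)
    (hdag : ∀ l, M ≤ l → ∀ w, E.pcnt (l + n) v w = E.pcnt l v w)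
    (i : ℕ) {w : E.V} (hw : w ∈ E.Sfin v M) :
    ∃ e, E.emits (E.sigma^[i] w) = {e} :=
  hsing_per hreg hn hdag (l := M + i) (by omega) (hiter_per hreg hn hdag i le_rfl hw)

end Sigma

section CycleCons

variable {E : DGraph}

theorem cycle_of_sigma {w : E.V} {N : ℕ} (hN : 0 < N) (hper : E.sigma^[N] w = w)
    (hsing : ∀ i, ∃ e, E.emits (E.sigma^[i] w) = {e}) :
    ∃ u₀ es, E.IsCycle u₀ es ∧ ¬ E.HasExit u₀ es ∧ w ∈ E.walkVerts u₀ es := by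
  classical
  have hEx : ∃ m, 0 < m ∧ E.sigma^[m] w = w := ⟨N, hN, hper⟩
  set N₀ := Nat.find hEx with hN₀def
  obtain ⟨hN₀pos, hN₀per⟩ := Nat.find_spec hEx
  have hmin : ∀ m, m < N₀ → ¬(0 < m ∧ E.sigma^[m] w = w) := fun m hm => Nat.find_min hEx hm
  set edge : ℕ → E.Ed := fun i => (hsing i).choose with hedgedef
  have hedge : ∀ i, E.emits (E.sigma^[i] w) = {edge i} := fun i => (hsing i).choose_spec
  have hs_edge : ∀ i, E.s (edge i) = E.sigma^[i] w := fun i => mem_emits_of_singleton (hedge i)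
  have hr_edge : ∀ i, E.r (edge i) = E.sigma^[i+1] w := by
    intro i
    rw [Function.iterate_succ_apply', sigma_eq (hedge i)]
  -- distinctness of iterates below N₀
  have hdist : ∀ a b, a < b → b < N₀ → E.sigma^[a] w ≠ E.sigma^[b] w := by
    intro a b hab hbN heqab
    have h1 : E.sigma^[(N₀ - b) + a] w = w := by
      rw [Function.iterate_add_apply, heqab, ← Function.iterate_add_apply,
        show N₀ - b + b = N₀ by omega]
      exact hN₀per
    exact hmin _ (by omega) ⟨by omega, h1⟩
  set es : List E.Ed := (List.range N₀).map edge with hesdef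
  have hlen : es.length = N₀ := by rw [hesdef, List.length_map, List.length_range]
  have hget : ∀ (i : ℕ) (h : i < es.length), es[i] = edge i := by
    intro i h
    simp only [hesdef, List.getElem_map, List.getElem_range]
  have hvert : ∀ x ∈ E.walkVerts w es, ∃ j, j < N₀ ∧ x = E.sigma^[j] w := by
    intro x hx
    rcases hx with hx | hx
    · exact ⟨0, hN₀pos, hx⟩
    · obtain ⟨e, he, hre⟩ := hx
      rw [hesdef, List.mem_map] at he
      obtain ⟨i, hi, hei⟩ := he
      rw [List.mem_range] at hi
      rcases Nat.lt_or_ge (i+1) N₀ with h' | h'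
      · exact ⟨i+1, h', by rw [← hre, ← hei, hr_edge i]⟩
      · have : i + 1 = N₀ := by omega
        refine ⟨0, hN₀pos, ?_⟩
        rw [← hre, ← hei, hr_edge i, this, hN₀per]
        rfl
  refine ⟨w, es, ⟨?_, ⟨?_, ?_⟩, ?_, ?_⟩, ?_, ?_⟩
  · -- es ≠ []
    intro h0
    rw [h0] at hlen
    simp at hlen
    omega
  · -- Chain'
    refine List.isChain_iff_getElem.mpr ?_
    intro i hi
    rw [hget i (by omega), hget (i+1) (by omega)]
    rw [hr_edge i, hs_edge (i+1)]
  · -- head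
    intro e he
    have h0 : es.head? = some (edge 0) := by
      rw [List.head?_eq_getElem?, List.getElem?_eq_getElem (by omega), hget 0 (by omega)]
    rw [h0] at he
    simp only [Option.mem_def, Option.some.injEq] at he
    rw [← he, hs_edge 0]
    rfl
  · -- endVert
    have hlast : es.getLast? = some (edge (N₀ - 1)) := by
      rw [List.getLast?_eq_getElem?, List.getElem?_eq_getElem (by omega)]
      rw [hget _ (by omega), hlen]
    rw [endVert, hlast]
    show E.r (edge (N₀ - 1)) = w
    rw [hr_edge, show N₀ - 1 + 1 = N₀ by omega, hN₀per]
  · -- Nodup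
    rw [hesdef, List.map_map]
    refine List.Nodup.map_on ?_ (List.nodup_range)
    intro i hi j hj hij
    rw [List.mem_range] at hi hj
    simp only [Function.comp_apply] at hij
    rw [hs_edge i, hs_edge j] at hij
    by_contra hne
    rcases Nat.lt_or_ge i j with h' | h'
    · exact hdist i j h' hj hij
    · exact hdist j i (by omega) hi hij.symm
  · -- no exit
    rintro ⟨x, hx, e, hse, hnot⟩
    obtain ⟨j, hj, hxj⟩ := hvert x hx
    have hee : e = edge j := by
      have : e ∈ E.emits (E.sigma^[j] w) := by
        show E.s e = E.sigma^[j] w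
        rw [hse, hxj]
      rw [hedge j] at this
      exact this
    refine hnot ?_
    rw [hee, hesdef, List.mem_map]
    exact ⟨j, List.mem_range.mpr hj, rfl⟩
  · -- w ∈ walkVerts
    exact Set.mem_insert _ _

end CycleCons

section Forward

variable {E : DGraph}

theorem satClosure_of_pcnt {v : E.V} {W : Set E.V} {l : ℕ}
    (hreg : ∀ u, E.Reaches v u → E.IsRegular u)
    (hW : ∀ w, E.pcnt l v w ≠ 0 → w ∈ W) : v ∈ E.satClosure W := by
  rw [satClosure]
  refine Set.mem_sInter.mpr ?_
  rintro H ⟨hHer, hSat, hWH⟩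
  have main : ∀ (l' : ℕ) (u : E.V), E.Reaches v u →
      (∀ w, E.pcnt l' u w ≠ 0 → w ∈ H) → u ∈ H := by
    intro l'
    induction l' with
    | zero =>
      intro u hu hloc
      exact hloc u (by rw [pcnt_zero_self]; omega)
    | succ l' ih =>
      intro u hu hloc
      have hfin := (hreg u hu).2
      refine hSat u (hreg u hu) fun e he => ?_
      refine ih (E.r e) (hu.tail ⟨e, he, rfl⟩) fun w hw => ?_
      refine hloc w ?_
      rw [pcnt_succ_reg hfin]
      have hle := Finset.single_le_sum (f := fun e' => E.pcnt l' (E.r e') w)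
        (fun _ _ => Nat.zero_le _) (hfin.mem_toFinset.mpr he)
      omega
  exact main l v Relation.ReflTransGen.refl (fun w hw => hWH (hW w hw))

theorem forward_direction {v : E.V} (hper : E.TPeriodic (E.tv v)) :
    ∃ W : Set E.V, W.Finite ∧
      (∀ u ∈ W, ∃ u₀ es, E.IsCycle u₀ es ∧ ¬ E.HasExit u₀ es ∧ u ∈ E.walkVerts u₀ es) ∧
      v ∈ E.satClosure W := by
  obtain ⟨hreg, n, M, hn, hdag⟩ := periodic_struct hper
  refine ⟨↑(E.Sfin v M), (E.Sfin v M).finite_toSet, ?_, ?_⟩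
  · intro u hu
    have hu' : u ∈ E.Sfin v M := hu
    obtain ⟨N, hN, hperN⟩ := exists_periodic_point hreg hn hdag hu'
    exact cycle_of_sigma hN hperN (fun i => iterate_sing hreg hn hdag i hu')
  · exact satClosure_of_pcnt hreg (fun w hw => mem_Sfin.mpr hw)

end Forward

section ShiftAlg

variable {E : DGraph}

theorem shiftF_comp (a b : ℤ) (x : E.FreeTal) :
    E.shiftF a (E.shiftF b x) = E.shiftF (b + a) x := by
  rw [shiftF, shiftF, shiftF, Finsupp.mapDomain.addMonoidHom_apply,
    Finsupp.mapDomain.addMonoidHom_apply, Finsupp.mapDomain.addMonoidHom_apply,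
    ← Finsupp.mapDomain_comp]
  congr 1
  funext p
  show (p.1 + b + a, p.2) = (p.1 + (b + a), p.2)
  rw [add_assoc]

theorem shiftT_comp (a b : ℤ) (x : E.Tal) :
    E.shiftT a (E.shiftT b x) = E.shiftT (b + a) x := by
  refine AddCon.induction_on x fun y => ?_
  show E.shiftT a (E.shiftT b (E.talCon.mk' y)) = E.shiftT (b+a) (E.talCon.mk' y)
  rw [shiftT_mk', shiftT_mk', shiftT_mk', shiftF_comp]

theorem shiftF_zero' (x : E.FreeTal) : E.shiftF 0 x = x := by
  rw [shiftF, Finsupp.mapDomain.addMonoidHom_apply]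
  have : (fun p : ℤ × E.TalGen => (p.1 + 0, p.2)) = id := by
    funext p; simp
  rw [this, Finsupp.mapDomain_id]

theorem shiftT_zero' (x : E.Tal) : E.shiftT 0 x = x := by
  refine AddCon.induction_on x fun y => ?_
  show E.shiftT 0 (E.talCon.mk' y) = E.talCon.mk' y
  rw [shiftT_mk', shiftF_zero']

theorem period_mul {x : E.Tal} {N : ℤ} (h : E.shiftT N x = x) (m : ℕ) :
    E.shiftT (N * m) x = x := by
  induction m with
  | zero => simpa using shiftT_zero' x
  | succ m ih =>
    have harith : N * ((m : ℕ) + 1 : ℕ) = N + N * m := by push_cast; ring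
    rw [harith, ← shiftT_comp, h, ih]

theorem step_src_ne_zero {y : E.FreeTal} (h : E.Step 0 y) : False := by
  obtain ⟨u, a, b, hr, hx, -⟩ := h
  obtain ⟨p, ha⟩ := talrel_lhs hr
  subst ha
  have hc := congrArg (fun f => f p) hx
  simp [Finsupp.single_apply] at hc

theorem steps_zero {c : E.FreeTal} (h : E.Steps 0 c) : c = 0 := by
  rcases Relation.ReflTransGen.cases_head h with rfl | ⟨y, hy, -⟩
  · rfl
  · exact (step_src_ne_zero hy).elim

theorem tv_ne_zero (v : E.V) : E.tv v ≠ 0 := by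
  intro h0
  have h1 : E.talCon.mk' (Finsupp.single ((0:ℤ), (Sum.inl v : E.TalGen)) 1)
      = E.talCon.mk' 0 := by
    rw [map_zero]
    exact h0
  obtain ⟨c, hc1, hc2⟩ := mk'_eq_iff_join.mp h1
  have hcz : c = 0 := steps_zero hc2
  refine steps_ne_zero hc1 ?_ hcz
  simp only [ne_eq, Finsupp.single_eq_zero]
  exact one_ne_zero

theorem shiftT_tv (m : ℤ) (x : E.V) :
    E.shiftT m (E.tv x) = E.talCon.mk' (Finsupp.single (m, (Sum.inl x : E.TalGen)) 1) := by
  rw [tv, shiftT_mk', shiftF_single, zero_add]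

theorem tv_rel_sum {u : E.V} (h : E.IsRegular u) :
    E.tv u = ∑ e ∈ h.2.toFinset, E.shiftT 1 (E.tv (E.r e)) := by
  have h1 : E.talCon.mk' (Finsupp.single ((0:ℤ), (Sum.inl u : E.TalGen)) 1)
      = E.talCon.mk' (E.tSum 0 h.2.toFinset) :=
    (AddCon.eq _).mpr (AddConGen.Rel.of _ _ (Or.inl ⟨0, u, h, rfl, rfl⟩))
  rw [tv, h1, tSum, map_sum]
  refine Finset.sum_congr rfl fun e _ => ?_
  rw [shiftT_tv, zero_add]

end ShiftAlg

section NoExitCycle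

variable {E : DGraph}

theorem noexit_cycle {u₀ : E.V} {es : List E.Ed} (hc : E.IsCycle u₀ es)
    (hnex : ¬ E.HasExit u₀ es) :
    (∀ x ∈ E.walkVerts u₀ es, ∀ y, E.Reaches x y → y ∈ E.walkVerts u₀ es) ∧
    (∀ x ∈ E.walkVerts u₀ es, ∃ N : ℕ, 0 < N ∧ E.shiftT (N:ℤ) (E.tv x) = E.tv x) := by
  obtain ⟨hnil, ⟨hchain, hhead⟩, hend, hnodup⟩ := hc
  have hl : 0 < es.length := List.length_pos_iff.mpr hnil
  set vert : ℕ → E.V := fun i => if h : i < es.length then E.s (es.get ⟨i, h⟩) else u₀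
    with hvertdef
  have hvert_lt : ∀ (i : ℕ) (h : i < es.length), vert i = E.s (es.get ⟨i, h⟩) := by
    intro i h; rw [hvertdef]; exact dif_pos h
  have hvert0 : vert 0 = u₀ := by
    rw [hvert_lt 0 hl]
    have h0 : es.head? = some (es.get ⟨0, hl⟩) := by
      rw [List.head?_eq_getElem?, List.getElem?_eq_getElem hl, List.get_eq_getElem]
    exact hhead _ (by rw [h0]; rfl)
  have hr_es : ∀ (i : ℕ) (h : i < es.length),
      E.r (es.get ⟨i, h⟩) = if i + 1 < es.length then vert (i+1) else u₀ := by
    intro i h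
    by_cases h2 : i + 1 < es.length
    · rw [if_pos h2, hvert_lt (i+1) h2]
      have hch := List.isChain_iff_getElem.mp hchain i (by omega)
      simp only [List.get_eq_getElem] at hch ⊢
      exact hch
    · rw [if_neg h2]
      have hi : i = es.length - 1 := by omega
      subst hi
      have hlast : es.getLast? = some (es.get ⟨es.length - 1, h⟩) := by
        rw [List.getLast?_eq_getElem?, List.getElem?_eq_getElem (by omega),
          List.get_eq_getElem]
      have he := hend
      rw [endVert, hlast] at he
      exact he
  have hvmem : ∀ (i : ℕ), i < es.length → vert i ∈ E.walkVerts u₀ es := by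
    intro i h
    rcases Nat.eq_zero_or_pos i with rfl | hp
    · rw [hvert0]; exact Set.mem_insert _ _
    · refine Set.mem_insert_iff.mpr (Or.inr ⟨es.get ⟨i-1, by omega⟩, List.get_mem es _, ?_⟩)
      rw [hr_es (i-1) (by omega), if_pos (by omega : i - 1 + 1 < es.length)]
      congr 1
      omega
  have hwv : ∀ x ∈ E.walkVerts u₀ es, ∃ i, i < es.length ∧ x = vert i := by
    rintro x (rfl | ⟨e, he, rfl⟩)
    · exact ⟨0, hl, hvert0.symm⟩
    · obtain ⟨i, hei⟩ := List.mem_iff_get.mp he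
      rw [← hei, hr_es i.1 i.2]
      by_cases h2 : i.1 + 1 < es.length
      · rw [if_pos h2]; exact ⟨i.1+1, h2, rfl⟩
      · rw [if_neg h2]; exact ⟨0, hl, hvert0.symm⟩
  have hnoex : ∀ x ∈ E.walkVerts u₀ es, ∀ e, E.s e = x → e ∈ es := by
    intro x hx e hse
    by_contra hno
    exact hnex ⟨x, hx, e, hse, hno⟩
  have hemits : ∀ (i : ℕ) (h : i < es.length), E.emits (vert i) = {es.get ⟨i, h⟩} := by
    intro i h
    ext e
    constructor
    · intro he
      have hes : e ∈ es := hnoex _ (hvmem i h) e he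
      obtain ⟨j, hej⟩ := List.mem_iff_get.mp hes
      have hss : E.s (es.get j) = E.s (es.get ⟨i, h⟩) := by
        rw [hej] at *
        rw [← hvert_lt i h]
        exact he
      have hmapget : ∀ (a : ℕ) (ha : a < es.length),
          (es.map E.s).get ⟨a, by rw [List.length_map]; exact ha⟩ = E.s (es.get ⟨a, ha⟩) := by
        intro a ha
        simp
      have hij : j.1 = i := by
        have h1 := hmapget j.1 j.2
        have h2 := hmapget i h
        have h3 : (es.map E.s).get ⟨j.1, by rw [List.length_map]; exact j.2⟩
            = (es.map E.s).get ⟨i, by rw [List.length_map]; exact h⟩ := by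
          rw [h1, h2]
          exact hss
        have := List.Nodup.get_inj_iff hnodup |>.mp h3
        exact congrArg Fin.val this
      rw [← hej]
      have : j = (⟨i, h⟩ : Fin es.length) := Fin.ext hij
      rw [this]
      rfl
    · intro he
      rw [Set.mem_singleton_iff] at he
      subst he
      show E.s _ = vert i
      rw [hvert_lt i h]
  have hregv : ∀ (i : ℕ) (h : i < es.length), E.IsRegular (vert i) := by
    intro i h
    rw [IsRegular, hemits i h]
    exact ⟨⟨_, rfl⟩, Set.finite_singleton _⟩
  -- hereditary
  have hered : ∀ x ∈ E.walkVerts u₀ es, ∀ y, E.Reaches x y → y ∈ E.walkVerts u₀ es := by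
    intro x hx y hxy
    induction hxy with
    | refl => exact hx
    | tail hsteps hadj ih =>
      obtain ⟨e, hse, hre⟩ := hadj
      have hes : e ∈ es := hnoex _ ih e hse
      exact Set.mem_insert_iff.mpr (Or.inr ⟨e, hes, hre⟩)
  refine ⟨hered, ?_⟩
  -- the key chain
  have hsingleF : ∀ (i : ℕ) (h : i < es.length),
      (hregv i h).2.toFinset = {es.get ⟨i, h⟩} := by
    intro i h
    ext e
    rw [Set.Finite.mem_toFinset, hemits i h, Set.mem_singleton_iff, Finset.mem_singleton]
  have hrel : ∀ (i : ℕ) (h : i < es.length),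
      E.tv (vert i) = E.shiftT 1 (E.tv (E.r (es.get ⟨i, h⟩))) := by
    intro i h
    rw [tv_rel_sum (hregv i h), hsingleF i h, Finset.sum_singleton]
  have key : ∀ (k : ℕ), 1 ≤ k → ∀ (i : ℕ), i + k = es.length →
      E.tv (vert i) = E.talCon.mk'
        (Finsupp.single (((k:ℕ):ℤ), (Sum.inl u₀ : E.TalGen)) 1) := by
    intro k
    induction k with
    | zero => exact fun h => absurd h (by omega)
    | succ k ih =>
      intro hk1 i hik
      have h : i < es.length := by omega
      rcases Nat.eq_zero_or_pos k with rfl | hk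
      · -- i = length - 1
        rw [hrel i h, hr_es i h, if_neg (by omega)]
        rw [shiftT_tv]
        push_cast
        rfl
      · rw [hrel i h, hr_es i h, if_pos (by omega), ih hk (i+1) (by omega)]
        rw [shiftT_mk', shiftF_single]
        push_cast
        ring_nf
  have hu₀ : E.tv u₀ = E.talCon.mk'
      (Finsupp.single (((es.length : ℕ):ℤ), (Sum.inl u₀ : E.TalGen)) 1) := by
    have h0 := key es.length hl 0 (by omega)
    rw [hvert0] at h0
    exact h0
  have hu₀per : E.shiftT ((es.length : ℕ):ℤ) (E.tv u₀) = E.tv u₀ := by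
    rw [← shiftT_tv] at hu₀
    exact hu₀.symm
  intro x hx
  obtain ⟨i, hi, rfl⟩ := hwv x hx
  refine ⟨es.length, hl, ?_⟩
  rcases Nat.eq_zero_or_pos i with rfl | hp
  · rw [hvert0]; exact hu₀per
  · have hki : E.tv (vert i) = E.shiftT ((es.length - i : ℕ):ℤ) (E.tv u₀) := by
      rw [shiftT_tv]
      exact key (es.length - i) (by omega) i (by omega)
    rw [hki, shiftT_comp, show ((es.length - i : ℕ):ℤ) + (es.length:ℕ)
        = ((es.length : ℕ):ℤ) + ((es.length - i : ℕ):ℤ) by ring, ← shiftT_comp, hu₀per]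

end NoExitCycle

section Reverse

variable {E : DGraph}

/-- The saturation layers over `W`. -/
def Lam (E : DGraph) (W : Set E.V) : ℕ → Set E.V
  | 0 => E.tree W
  | (k+1) => Lam E W k ∪ {u | E.IsRegular u ∧ ∀ e ∈ E.emits u, E.r e ∈ Lam E W k}

theorem Lam_mono (W : Set E.V) {k k' : ℕ} (h : k ≤ k') : E.Lam W k ⊆ E.Lam W k' := by
  obtain ⟨m, rfl⟩ := Nat.exists_eq_add_of_le h
  clear h
  induction m with
  | zero => exact subset_rfl
  | succ m ih =>
    intro x hx
    exact Set.mem_union_left _ (ih hx)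

theorem Lam_hereditary (W : Set E.V) (k : ℕ) :
    ∀ u ∈ E.Lam W k, ∀ y, E.Reaches u y → y ∈ E.Lam W k := by
  induction k with
  | zero =>
    rintro u ⟨w, hwW, hwu⟩ y huy
    exact ⟨w, hwW, hwu.trans huy⟩
  | succ k ih =>
    rintro u (hu | ⟨hreg, hsucc⟩) y huy
    · exact Set.mem_union_left _ (ih u hu y huy)
    · rcases Relation.ReflTransGen.cases_head huy with rfl | ⟨z, ⟨e, hse, hre⟩, hzy⟩
      · exact Set.mem_union_right _ ⟨hreg, hsucc⟩
      · refine Set.mem_union_left _ (ih z ?_ y hzy)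
        rw [← hre]
        exact hsucc e hse

theorem reverse_direction {v : E.V} {W : Set E.V}
    (hWcyc : ∀ u ∈ W, ∃ u₀ es, E.IsCycle u₀ es ∧ ¬ E.HasExit u₀ es ∧ u ∈ E.walkVerts u₀ es)
    (hv : v ∈ E.satClosure W) : E.TPeriodic (E.tv v) := by
  classical
  have htree : ∀ u ∈ E.tree W, ∃ N : ℕ, 0 < N ∧ E.shiftT (N:ℤ) (E.tv u) = E.tv u := by
    rintro u ⟨w, hwW, hwu⟩
    obtain ⟨u₀, es, hc, hne, hwmem⟩ := hWcyc w hwW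
    obtain ⟨hher, hper⟩ := noexit_cycle hc hne
    exact hper u (hher w hwmem u hwu)
  have hLam : ∀ k, ∀ u ∈ E.Lam W k,
      ∃ N : ℕ, 0 < N ∧ E.shiftT (N:ℤ) (E.tv u) = E.tv u := by
    intro k
    induction k with
    | zero => exact htree
    | succ k ih =>
      rintro u (hu | ⟨hreg, hsucc⟩)
      · exact ih u hu
      · set g : E.Ed → ℕ := fun e =>
          if h : ∃ N : ℕ, 0 < N ∧ E.shiftT (N:ℤ) (E.tv (E.r e)) = E.tv (E.r e)
          then h.choose else 1 with hgdef
        have hgpos : ∀ e, 0 < g e := by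
          intro e
          simp only [hgdef]
          by_cases h : ∃ N : ℕ, 0 < N ∧ E.shiftT (N:ℤ) (E.tv (E.r e)) = E.tv (E.r e)
          · rw [dif_pos h]; exact h.choose_spec.1
          · rw [dif_neg h]; omega
        set Nbig : ℕ := ∏ e ∈ hreg.2.toFinset, g e with hNdef
        have hNpos : 0 < Nbig := Finset.prod_pos (fun e _ => hgpos e)
        refine ⟨Nbig, hNpos, ?_⟩
        rw [tv_rel_sum hreg, map_sum]
        refine Finset.sum_congr rfl fun e he => ?_
        have hEx : ∃ N : ℕ, 0 < N ∧ E.shiftT (N:ℤ) (E.tv (E.r e)) = E.tv (E.r e) :=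
          ih (E.r e) (hsucc e (hreg.2.mem_toFinset.mp he))
        have hge : E.shiftT ((g e : ℕ):ℤ) (E.tv (E.r e)) = E.tv (E.r e) := by
          simp only [hgdef]
          rw [dif_pos hEx]
          exact hEx.choose_spec.2
        obtain ⟨c, hc⟩ := Finset.dvd_prod_of_mem g he
        have hper' : E.shiftT ((Nbig : ℕ):ℤ) (E.tv (E.r e)) = E.tv (E.r e) := by
          have h2 := period_mul hge c
          rw [← h2]
          congr 1
          rw [hNdef, hc]
          push_cast
          ring
        rw [shiftT_comp, add_comm, ← shiftT_comp, hper']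
  have hUnion : v ∈ ⋃ k, E.Lam W k := by
    refine Set.mem_sInter.mp hv _ ⟨?_, ?_, ?_⟩
    · -- hereditary
      intro u hu y huy
      obtain ⟨k, hk⟩ := Set.mem_iUnion.mp hu
      exact Set.mem_iUnion.mpr ⟨k, Lam_hereditary W k u hk y huy⟩
    · -- saturated
      intro u hureg hsucc
      set g' : E.Ed → ℕ := fun e =>
        if h : ∃ k, E.r e ∈ E.Lam W k then h.choose else 0 with hg'def
      set K : ℕ := hureg.2.toFinset.sup g' with hKdef
      refine Set.mem_iUnion.mpr ⟨K + 1, Set.mem_union_right _ ⟨hureg, fun e he => ?_⟩⟩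
      have hEx : ∃ k, E.r e ∈ E.Lam W k :=
        Set.mem_iUnion.mp (hsucc e he)
      have h1 : E.r e ∈ E.Lam W (g' e) := by
        simp only [hg'def]
        rw [dif_pos hEx]
        exact hEx.choose_spec
      exact Lam_mono W (Finset.le_sup (hureg.2.mem_toFinset.mpr he)) h1
    · -- W ⊆ union
      intro u hu
      exact Set.mem_iUnion.mpr ⟨0, ⟨u, hu, Relation.ReflTransGen.refl⟩⟩
  obtain ⟨k, hvk⟩ := Set.mem_iUnion.mp hUnion
  obtain ⟨N, hN, hper⟩ := hLam k v hvk
  exact ⟨tv_ne_zero v, (N:ℤ), by exact_mod_cast hN, hper⟩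

end Reverse
end DGraph
/-- `[v]` is a periodic element of the talented monoid `M_E^Γ` iff
`v` lies in the saturated closure of a finite set of vertices lying on cycles
without exits. -/
theorem tv_periodic_iff (E : DGraph) (v : E.V) :
    E.TPeriodic (E.tv v) ↔
      ∃ W : Set E.V, W.Finite ∧
        (∀ u ∈ W, ∃ u₀ es, E.IsCycle u₀ es ∧ ¬ E.HasExit u₀ es ∧
          u ∈ E.walkVerts u₀ es) ∧
        v ∈ E.satClosure W := by
  constructor
  · exact DGraph.forward_direction
  · rintro ⟨W, -, hcyc, hv⟩
    exact DGraph.reverse_direction hcyc hv
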